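/- arXiv:2405.18833 — 4 statements merged into one kernel-verified Lean document; each statement's English description precedes it below -/
import Mathlib

section
/- In Construction 1, all perfect matchings have pairwise distinct weights: for any integer n ≥ 1 and any two distinct bijections σ, τ from {0,…,n−1} to {1,…,n}, one has Σ_{i=0}^{n−1} ‖u_i − v_{σ(i)}‖ ≠ Σ_{i=0}^{n−1} ‖u_i − v_{τ(i)}‖. -/
open scoped BigOperators

/-- A point of `ℝ²` from two coordinates. -/
noncomputable def mk2 (x y : ℝ) : EuclideanSpace ℝ (Fin 2) :=
  (WithLp.equiv 2 (Fin 2 → ℝ)).symm ![x, y]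

/-- Construction 1: the left-hand point `u_i = (0, i)`, for `0 ≤ i ≤ n-1`. -/
noncomputable def uPt (i : ℕ) : EuclideanSpace ℝ (Fin 2) := mk2 0 (i : ℝ)

/-- Construction 1: the right-hand point `v_j = (n⁴, j·n)`, for `1 ≤ j ≤ n`. -/
noncomputable def vPt (n j : ℕ) : EuclideanSpace ℝ (Fin 2) := mk2 ((n : ℝ) ^ 4) ((j : ℝ) * n)

/-- The weight of the perfect matching of Construction 1 that matches `u_i` with
`v_{σ(i)+1}`; as `σ` ranges over permutations of `Fin n`, `i ↦ σ(i)+1` ranges over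
all bijections from `{0,…,n-1}` to `{1,…,n}`. -/
noncomputable def matchWeight (n : ℕ) (σ : Equiv.Perm (Fin n)) : ℝ :=
  ∑ i : Fin n, ‖uPt (i : ℕ) - vPt n ((σ i : ℕ) + 1)‖

section SqrtIndep

open Real Finset

noncomputable section

def sqrtField (P : Finset ℕ) : Subfield ℝ :=
  Subfield.closure ((fun p : ℕ => Real.sqrt p) '' ↑P)

lemma sqrt_mem_sqrtField {P : Finset ℕ} {p : ℕ} (hp : p ∈ P) :
    Real.sqrt p ∈ sqrtField P :=
  Subfield.subset_closure ⟨p, hp, rfl⟩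

/-- The rationals, as a subfield of `ℝ`. -/
def ratSubfield : Subfield ℝ where
  carrier := Set.range ((↑) : ℚ → ℝ)
  mul_mem' := by rintro _ _ ⟨a, rfl⟩ ⟨b, rfl⟩; exact ⟨a * b, by push_cast; ring⟩
  one_mem' := ⟨1, by norm_num⟩
  add_mem' := by rintro _ _ ⟨a, rfl⟩ ⟨b, rfl⟩; exact ⟨a + b, by push_cast; ring⟩
  zero_mem' := ⟨0, by norm_num⟩
  neg_mem' := by rintro _ ⟨a, rfl⟩; exact ⟨-a, by push_cast; ring⟩
  inv_mem' := by rintro _ ⟨a, rfl⟩; exact ⟨a⁻¹, by push_cast; ring⟩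

lemma sqrtField_empty {x : ℝ} (hx : x ∈ sqrtField ∅) : ∃ r : ℚ, x = r := by
  have h : sqrtField ∅ ≤ ratSubfield := by
    rw [sqrtField, Subfield.closure_le]
    simp
  obtain ⟨r, hr⟩ := h hx
  exact ⟨r, hr.symm⟩

/-- `F + F·√q` is a subfield when `√q ∉ F`. -/
def quadExt (F : Subfield ℝ) (q : ℕ) (hq : Real.sqrt q ∉ F) : Subfield ℝ where
  carrier := {z | ∃ x ∈ F, ∃ y ∈ F, z = x + y * Real.sqrt q}
  one_mem' := ⟨1, F.one_mem, 0, F.zero_mem, by ring⟩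
  zero_mem' := ⟨0, F.zero_mem, 0, F.zero_mem, by ring⟩
  add_mem' := by
    rintro _ _ ⟨x, hx, y, hy, rfl⟩ ⟨x', hx', y', hy', rfl⟩
    exact ⟨x + x', F.add_mem hx hx', y + y', F.add_mem hy hy', by ring⟩
  neg_mem' := by
    rintro _ ⟨x, hx, y, hy, rfl⟩
    exact ⟨-x, F.neg_mem hx, -y, F.neg_mem hy, by ring⟩
  mul_mem' := by
    rintro _ _ ⟨x, hx, y, hy, rfl⟩ ⟨x', hx', y', hy', rfl⟩
    refine ⟨x * x' + y * y' * q, ?_, x * y' + y * x', ?_, ?_⟩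
    · exact F.add_mem (F.mul_mem hx hx') (F.mul_mem (F.mul_mem hy hy') (natCast_mem F q))
    · exact F.add_mem (F.mul_mem hx hy') (F.mul_mem hy hx')
    · have hsq : Real.sqrt q * Real.sqrt q = (q : ℝ) := Real.mul_self_sqrt (Nat.cast_nonneg q)
      linear_combination y * y' * hsq
  inv_mem' := by
    rintro z ⟨x, hx, y, hy, rfl⟩
    rcases eq_or_ne (x + y * Real.sqrt q) 0 with h0 | h0
    · exact ⟨0, F.zero_mem, 0, F.zero_mem, by rw [h0]; simp⟩
    have hsq : Real.sqrt q * Real.sqrt q = (q : ℝ) := Real.mul_self_sqrt (Nat.cast_nonneg q)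
    have hD : x ^ 2 - q * y ^ 2 ≠ 0 := by
      intro hD
      rcases eq_or_ne y 0 with hy0 | hy0
      · apply h0
        have hx2 : x ^ 2 = 0 := by rw [hy0] at hD; linarith
        have hx0 : x = 0 := by
          exact pow_eq_zero_iff (n := 2) (by norm_num) |>.mp hx2
        rw [hx0, hy0]; ring
      · have : (x / y) ^ 2 = (q : ℝ) := by field_simp; nlinarith [hD]
        have habs : Real.sqrt q = |x / y| := by
          rw [← this, Real.sqrt_sq_eq_abs]
        rcases abs_cases (x / y) with ⟨he, _⟩ | ⟨he, _⟩
        · exact hq (by rw [habs, he]; exact F.div_mem hx hy)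
        · exact hq (by rw [habs, he]; exact F.neg_mem (F.div_mem hx hy))
    refine ⟨x / (x ^ 2 - q * y ^ 2), F.div_mem hx (F.sub_mem (F.pow_mem hx 2)
        (F.mul_mem (natCast_mem F q) (F.pow_mem hy 2))),
      -y / (x ^ 2 - q * y ^ 2), F.div_mem (F.neg_mem hy) (F.sub_mem (F.pow_mem hx 2)
        (F.mul_mem (natCast_mem F q) (F.pow_mem hy 2))), ?_⟩
    have key : (x + y * Real.sqrt q) *
        (x / (x ^ 2 - q * y ^ 2) + -y / (x ^ 2 - q * y ^ 2) * Real.sqrt q) = 1 := by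
      have hD' : x ^ 2 - y ^ 2 * (q : ℝ) ≠ 0 := by rwa [mul_comm] at hD
      field_simp
      linear_combination (-(y ^ 2)) * hsq
    exact inv_eq_of_mul_eq_one_right key
  
lemma mem_sqrtField_insert {P : Finset ℕ} {q : ℕ}
    (hq : Real.sqrt q ∉ sqrtField P) {z : ℝ} (hz : z ∈ sqrtField (insert q P)) :
    ∃ x ∈ sqrtField P, ∃ y ∈ sqrtField P, z = x + y * Real.sqrt q := by
  have hle : sqrtField (insert q P) ≤ quadExt (sqrtField P) q hq := by
    rw [sqrtField, Subfield.closure_le]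
    rintro _ ⟨p, hp, rfl⟩
    rcases Finset.mem_insert.mp (by exact_mod_cast hp) with rfl | hp'
    · exact ⟨0, Subfield.zero_mem _, 1, Subfield.one_mem _, by ring⟩
    · exact ⟨Real.sqrt p, sqrt_mem_sqrtField hp', 0, Subfield.zero_mem _, by ring⟩
  exact hle hz

end

noncomputable section
/-- If `√m ∈ sqrtField P` for `m` squarefree and `P` a set of primes, then all prime
factors of `m` lie in `P`. -/
theorem primeFactors_subset_of_sqrt_mem :
    ∀ (P : Finset ℕ), (∀ p ∈ P, p.Prime) → ∀ m : ℕ, Squarefree m →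
      Real.sqrt m ∈ sqrtField P → m.primeFactors ⊆ P := by
  intro P
  induction P using Finset.induction_on with
  | empty =>
    intro _ m hm hmem
    obtain ⟨r, hr⟩ := sqrtField_empty hmem
    have hni : ¬ Irrational (Real.sqrt m) := by
      rw [hr]; exact Rat.not_irrational r
    rw [irrational_sqrt_natCast_iff] at hni
    push_neg at hni
    obtain ⟨k, hk⟩ := hni
    have : IsUnit k := hm k (by rw [hk])
    have : m = 1 := by rw [hk, Nat.isUnit_iff.mp this]
    simp [this]
  | @insert q P₀ hqP₀ ih =>
    intro hP m hm hmem
    have hq : q.Prime := hP q (Finset.mem_insert_self q P₀)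
    have hP₀ : ∀ p ∈ P₀, p.Prime := fun p hp => hP p (Finset.mem_insert_of_mem hp)
    have hsq : Real.sqrt q ∉ sqrtField P₀ := by
      intro hc
      have := ih hP₀ q hq.squarefree hc
      rw [Nat.Prime.primeFactors hq] at this
      exact hqP₀ (this (Finset.mem_singleton_self q))
    obtain ⟨x, hx, y, hy, hxy⟩ := mem_sqrtField_insert hsq hmem
    have hm0 : m ≠ 0 := hm.ne_zero
    have hqq : Real.sqrt q * Real.sqrt q = (q : ℝ) := Real.mul_self_sqrt (Nat.cast_nonneg q)
    have hmm : Real.sqrt m * Real.sqrt m = (m : ℝ) := Real.mul_self_sqrt (Nat.cast_nonneg m)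
    rcases eq_or_ne y 0 with hy0 | hy0
    · rw [hy0, zero_mul, add_zero] at hxy
      exact (ih hP₀ m hm (hxy ▸ hx)).trans (Finset.subset_insert q P₀)
    · have hx0 : x = 0 := by
        by_contra hx0
        apply hsq
        have hmexp : (m : ℝ) = x ^ 2 + y ^ 2 * q + 2 * x * y * Real.sqrt q := by
          rw [← hmm, hxy]; linear_combination y ^ 2 * hqq
        have : Real.sqrt q = ((m : ℝ) - x ^ 2 - y ^ 2 * q) / (2 * x * y) := by
          field_simp
          linarith [hmexp]
        rw [this]
        exact Subfield.div_mem _ (Subfield.sub_mem _ (Subfield.sub_mem _ (natCast_mem _ m)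
          (Subfield.pow_mem _ hx 2)) (Subfield.mul_mem _ (Subfield.pow_mem _ hy 2)
          (natCast_mem _ q))) (Subfield.mul_mem _ (Subfield.mul_mem _
          (by exact natCast_mem _ 2) hx) hy)
      rw [hx0, zero_add] at hxy
      -- √m = y * √q hence √(m*q) = y * q ∈ sqrtField P₀
      have hmq : Real.sqrt (m * q : ℕ) = y * q := by
        rw [Nat.cast_mul, Real.sqrt_mul (Nat.cast_nonneg m)]
        rw [hxy]
        linear_combination y * hqq
      rcases Nat.eq_zero_or_pos m with rfl | hmpos
      · exact absurd rfl hm0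
      by_cases hdvd : q ∣ m
      · -- m = q * m'
        obtain ⟨m', hm'⟩ := hdvd
        have hm'0 : m' ≠ 0 := fun h => hm0 (by rw [hm', h, mul_zero])
        have hm'sf : Squarefree m' := hm'.symm ▸ hm |>.of_mul_right
        have hmq' : (m * q : ℕ) = q ^ 2 * m' := by rw [hm']; ring
        have hsm' : Real.sqrt m' = y := by
          have h1 : Real.sqrt ((m * q : ℕ) : ℝ) = q * Real.sqrt m' := by
            rw [hmq']
            push_cast
            rw [Real.sqrt_mul (by positivity), Real.sqrt_sq (by positivity)]
          have hq0 : (q : ℝ) ≠ 0 := Nat.cast_ne_zero.mpr hq.ne_zero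
          rw [hmq] at h1
          apply mul_left_cancel₀ hq0
          rw [← h1]; ring
        have h2 := ih hP₀ m' hm'sf (hsm' ▸ hy)
        intro p hp
        rw [hm', Nat.primeFactors_mul hq.ne_zero hm'0] at hp
        rcases Finset.mem_union.mp hp with h | h
        · rw [Nat.Prime.primeFactors hq] at h
          rw [Finset.mem_singleton.mp h]
          exact Finset.mem_insert_self q P₀
        · exact Finset.mem_insert_of_mem (h2 h)
      · -- q ∤ m : m*q squarefree, √(m*q) ∈ sqrtField P₀, contradiction q ∈ P₀
        exfalso
        have hcop : Nat.Coprime q m := (Nat.Prime.coprime_iff_not_dvd hq).mpr hdvd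
        have hsf : Squarefree (m * q) := by
          rw [Nat.squarefree_mul hcop.symm]
          exact ⟨hm, hq.squarefree⟩
        have hmemq : Real.sqrt ((m * q : ℕ) : ℝ) ∈ sqrtField P₀ := by
          rw [hmq]
          exact Subfield.mul_mem _ hy (natCast_mem _ q)
        have hsub := ih hP₀ (m * q) hsf hmemq
        have hqmem : q ∈ (m * q).primeFactors := by
          rw [Nat.mem_primeFactors]
          exact ⟨hq, Dvd.intro_left m rfl, Nat.mul_ne_zero hm0 hq.ne_zero⟩
        exact hqP₀ (hsub hqmem)

lemma sqrt_natCast_prod (S : Finset ℕ) :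
    Real.sqrt (↑(∏ p ∈ S, p) : ℝ) = ∏ p ∈ S, Real.sqrt p := by
  induction S using Finset.induction_on with
  | empty => simp
  | @insert a s ha ih =>
    rw [Finset.prod_insert ha, Finset.prod_insert ha, Nat.cast_mul,
      Real.sqrt_mul (Nat.cast_nonneg a), ih]

lemma sqrt_prod_mem {P S : Finset ℕ} (hS : S ⊆ P) :
    Real.sqrt (↑(∏ p ∈ S, p) : ℝ) ∈ sqrtField P := by
  rw [sqrt_natCast_prod]
  exact Subfield.prod_mem _ fun p hp => sqrt_mem_sqrtField (hS hp)

theorem li_powerset :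
    ∀ (P : Finset ℕ), (∀ p ∈ P, p.Prime) → ∀ c : Finset ℕ → ℤ,
      (∑ S ∈ P.powerset, (c S : ℝ) * Real.sqrt (↑(∏ p ∈ S, p) : ℝ)) = 0 →
      ∀ S ∈ P.powerset, c S = 0 := by
  intro P
  induction P using Finset.induction_on with
  | empty =>
    intro _ c hc S hS
    rw [Finset.powerset_empty, Finset.sum_singleton] at hc
    simp at hc
    rw [Finset.powerset_empty, Finset.mem_singleton] at hS
    rwa [hS]
  | @insert q P₀ hqP₀ ih =>
    intro hP c hc
    have hq : q.Prime := hP q (Finset.mem_insert_self q P₀)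
    have hP₀ : ∀ p ∈ P₀, p.Prime := fun p hp => hP p (Finset.mem_insert_of_mem hp)
    have hsq : Real.sqrt q ∉ sqrtField P₀ := by
      intro hcon
      have := primeFactors_subset_of_sqrt_mem P₀ hP₀ q hq.squarefree hcon
      rw [Nat.Prime.primeFactors hq] at this
      exact hqP₀ (this (Finset.mem_singleton_self q))
    rw [Finset.powerset_insert] at hc
    have hdisj : Disjoint P₀.powerset (P₀.powerset.image (insert q)) := by
      rw [Finset.disjoint_left]
      intro S hS hS'
      obtain ⟨S', _, rfl⟩ := Finset.mem_image.mp hS'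
      exact hqP₀ (Finset.mem_powerset.mp hS (Finset.mem_insert_self q S'))
    rw [Finset.sum_union hdisj] at hc
    have hinj : ∀ x ∈ P₀.powerset, ∀ y ∈ P₀.powerset, insert q x = insert q y → x = y := by
      intro x hx y hy hxy
      have hqx : q ∉ x := fun h => hqP₀ (Finset.mem_powerset.mp hx h)
      have hqy : q ∉ y := fun h => hqP₀ (Finset.mem_powerset.mp hy h)
      rw [← Finset.erase_insert hqx, ← Finset.erase_insert hqy, hxy]
    rw [Finset.sum_image hinj] at hc
    have hrw : ∀ S ∈ P₀.powerset,
        (c (insert q S) : ℝ) * Real.sqrt (↑(∏ p ∈ insert q S, p) : ℝ)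
          = ((c (insert q S) : ℝ) * Real.sqrt (↑(∏ p ∈ S, p) : ℝ)) * Real.sqrt q := by
      intro S hS
      have hqS : q ∉ S := fun h => hqP₀ (Finset.mem_powerset.mp hS h)
      rw [Finset.prod_insert hqS, Nat.cast_mul, Real.sqrt_mul (Nat.cast_nonneg q)]
      ring
    rw [Finset.sum_congr rfl hrw, ← Finset.sum_mul] at hc
    set A := ∑ S ∈ P₀.powerset, (c S : ℝ) * Real.sqrt (↑(∏ p ∈ S, p) : ℝ) with hA
    set B := ∑ S ∈ P₀.powerset, (c (insert q S) : ℝ) * Real.sqrt (↑(∏ p ∈ S, p) : ℝ) with hB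
    have hAmem : A ∈ sqrtField P₀ :=
      Subfield.sum_mem _ fun S hS => Subfield.mul_mem _ (intCast_mem _ _)
        (sqrt_prod_mem (Finset.mem_powerset.mp hS))
    have hBmem : B ∈ sqrtField P₀ :=
      Subfield.sum_mem _ fun S hS => Subfield.mul_mem _ (intCast_mem _ _)
        (sqrt_prod_mem (Finset.mem_powerset.mp hS))
    have hB0 : B = 0 := by
      by_contra hB0
      apply hsq
      have : Real.sqrt q = -A / B := by
        field_simp
        linarith [hc]
      rw [this]
      exact Subfield.div_mem _ (Subfield.neg_mem _ hAmem) hBmem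
    have hA0 : A = 0 := by
      rw [hB0, zero_mul, add_zero] at hc
      exact hc
    have h1 := ih hP₀ c hA0
    have h2 := ih hP₀ (fun S => c (insert q S)) hB0
    intro S hS
    rw [Finset.mem_powerset] at hS
    by_cases hqS : q ∈ S
    · have her : S.erase q ⊆ P₀ := by
        intro x hx
        rcases Finset.mem_insert.mp (hS (Finset.mem_of_mem_erase hx)) with h | h
        · exact absurd h (Finset.ne_of_mem_erase hx)
        · exact h
      simpa [Finset.insert_erase hqS] using h2 (S.erase q) (Finset.mem_powerset.mpr her)
    · have hsub : S ⊆ P₀ := fun x hx => by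
        rcases Finset.mem_insert.mp (hS hx) with h | h
        · exact absurd h (fun he => hqS (he ▸ hx))
        · exact h
      exact h1 S (Finset.mem_powerset.mpr hsub)

theorem sqrt_linindep (U : Finset ℕ) (g : ℕ → ℕ)
    (h1 : ∀ t ∈ U, ¬ IsSquare (g t))
    (h2 : ∀ s ∈ U, ∀ t ∈ U, s ≠ t → ¬ IsSquare (g s * g t))
    (c : ℕ → ℤ)
    (hsum : ∑ t ∈ U, (c t : ℝ) * Real.sqrt (g t) = 0) :
    ∀ t ∈ U, c t = 0 := by
  classical
  have hdecomp : ∀ t ∈ U, ∃ a b : ℕ, b ^ 2 * a = g t ∧ Squarefree a ∧ 0 < b := by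
    intro t ht
    obtain ⟨a, b, hab, hsf⟩ := Nat.sq_mul_squarefree (g t)
    refine ⟨a, b, hab, hsf, ?_⟩
    rcases Nat.eq_zero_or_pos b with rfl | h
    · exfalso; apply h1 t ht; rw [← hab]; exact ⟨0, by ring⟩
    · exact h
  choose! a b hab hsf hbpos using hdecomp
  have ha1 : ∀ t ∈ U, 1 < a t := by
    intro t ht
    have h0 : a t ≠ 0 := (hsf t ht).ne_zero
    have hne1 : a t ≠ 1 := by
      intro h
      apply h1 t ht
      rw [← hab t ht, h]
      exact ⟨b t, by ring⟩
    omega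
  set Sfun : ℕ → Finset ℕ := fun t => (a t).primeFactors with hSfun
  have hprodS : ∀ t ∈ U, ∏ p ∈ Sfun t, p = a t := fun t ht =>
    Nat.prod_primeFactors_of_squarefree (hsf t ht)
  have hinj : ∀ s ∈ U, ∀ t ∈ U, Sfun s = Sfun t → s = t := by
    intro s hs t ht hst
    by_contra hne
    apply h2 s hs t ht hne
    have : a s = a t := by rw [← hprodS s hs, ← hprodS t ht, hst]
    refine ⟨b s * b t * a t, ?_⟩
    rw [← hab s hs, ← hab t ht, this]; ring
  set P : Finset ℕ := U.biUnion Sfun with hPdef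
  have hP : ∀ p ∈ P, p.Prime := by
    intro p hp
    obtain ⟨t, _, hpt⟩ := Finset.mem_biUnion.mp hp
    exact Nat.prime_of_mem_primeFactors hpt
  set c' : Finset ℕ → ℤ := fun S => ∑ t ∈ U.filter (fun t => Sfun t = S), c t * (b t : ℤ)
    with hc'
  have hmaps : ∀ t ∈ U, Sfun t ∈ P.powerset := by
    intro t ht
    exact Finset.mem_powerset.mpr (fun p hp => Finset.mem_biUnion.mpr ⟨t, ht, hp⟩)
  have hsum' : ∑ S ∈ P.powerset, (c' S : ℝ) * Real.sqrt (↑(∏ p ∈ S, p) : ℝ) = 0 := by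
    have key : ∀ S ∈ P.powerset, (c' S : ℝ) * Real.sqrt (↑(∏ p ∈ S, p) : ℝ)
        = ∑ t ∈ U.filter (fun t => Sfun t = S), (c t : ℝ) * Real.sqrt (g t) := by
      intro S _
      rw [hc', Int.cast_sum, Finset.sum_mul]
      refine Finset.sum_congr rfl ?_
      intro t ht
      obtain ⟨htU, htS⟩ := Finset.mem_filter.mp ht
      have h3 : (∏ p ∈ S, p) = a t := by rw [← htS]; exact hprodS t htU
      have h4 : Real.sqrt (g t) = (b t : ℝ) * Real.sqrt (a t) := by
        rw [← hab t htU]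
        push_cast
        rw [Real.sqrt_mul (by positivity), Real.sqrt_sq (by positivity)]
      rw [h3, h4]
      push_cast
      ring
    rw [Finset.sum_congr rfl key, Finset.sum_fiberwise_of_maps_to hmaps, hsum]
  have hzero := li_powerset P hP c' hsum'
  intro t ht
  have hfilter : U.filter (fun s => Sfun s = Sfun t) = {t} := by
    ext s
    simp only [Finset.mem_filter, Finset.mem_singleton]
    constructor
    · rintro ⟨hsU, hs⟩; exact hinj s hsU t ht hs
    · rintro rfl; exact ⟨ht, rfl⟩
  have := hzero (Sfun t) (hmaps t ht)
  rw [hc'] at this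
  simp only [hfilter, Finset.sum_singleton] at this
  have hb : (b t : ℤ) ≠ 0 := by exact_mod_cast (hbpos t ht).ne'
  exact (mul_eq_zero.mp this).resolve_right hb


lemma nonsquare_single {Q aa : ℕ} (hQ : 1 ≤ Q) (ha : 1 ≤ aa) (haQ : aa ≤ Q) :
    ¬ IsSquare (Q ^ 2 + aa) := by
  rintro ⟨k, hk⟩
  rw [pow_two] at hk
  have h1 : Q < k := by
    by_contra h
    push_neg at h
    have : k * k ≤ Q * Q := Nat.mul_le_mul h h
    omega
  have h2 : (Q + 1) * (Q + 1) ≤ k * k := Nat.mul_le_mul h1 h1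
  nlinarith

lemma nonsquare_prod {Q a b : ℕ} (hQ : 1 ≤ Q) (ha : 1 ≤ a) (hab : a < b) (hb : b ≤ Q) :
    ¬ IsSquare ((Q ^ 2 + a) * (Q ^ 2 + b)) := by
  rintro ⟨k, hk⟩
  have hQ' : (1 : ℤ) ≤ Q := by exact_mod_cast hQ
  have ha' : (1 : ℤ) ≤ a := by exact_mod_cast ha
  have hab' : (a : ℤ) < b := by exact_mod_cast hab
  have hb' : (b : ℤ) ≤ Q := by exact_mod_cast hb
  have hk' : ((Q : ℤ) ^ 2 + a) * ((Q : ℤ) ^ 2 + b) = k * k := by exact_mod_cast hk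
  have e : (2 * (k : ℤ)) ^ 2
      = (2 * (Q : ℤ) ^ 2 + a + b) ^ 2 - ((b : ℤ) - a) ^ 2 := by
    linear_combination (-4 : ℤ) * hk'
  have hd : ((b : ℤ) - a) ^ 2 ≤ (Q : ℤ) ^ 2 := by nlinarith
  have hd1 : (1 : ℤ) ≤ ((b : ℤ) - a) ^ 2 := by nlinarith
  have hQ2 : (1 : ℤ) ≤ (Q : ℤ) ^ 2 := by nlinarith
  have h5 : (2 * (k : ℤ)) ^ 2 < (2 * (Q : ℤ) ^ 2 + a + b) ^ 2 := by linarith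
  have h6 : (2 * (Q : ℤ) ^ 2 + a + b - 2) ^ 2 < (2 * (k : ℤ)) ^ 2 := by linarith
  have hxy : 2 * (k : ℤ) < 2 * (Q : ℤ) ^ 2 + a + b :=
    lt_of_pow_lt_pow_left₀ 2 (by positivity) h5
  have hyx : 2 * (Q : ℤ) ^ 2 + a + b - 2 < 2 * (k : ℤ) :=
    lt_of_pow_lt_pow_left₀ 2 (by positivity) h6
  have hxeq : 2 * (k : ℤ) = 2 * (Q : ℤ) ^ 2 + a + b - 1 := by omega
  rw [hxeq] at e
  have h7 : ((b : ℤ) - a) ^ 2 = 2 * (2 * (Q : ℤ) ^ 2 + a + b) - 1 := by linarith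
  linarith

lemma norm_uv (n i j : ℕ) :
    ‖uPt i - vPt n j‖ = Real.sqrt (((n : ℝ) ^ 4) ^ 2 + ((j : ℝ) * n - i) ^ 2) := by
  rw [EuclideanSpace.norm_eq]
  congr 1
  rw [Fin.sum_univ_two]
  have h0 : (uPt i - vPt n j) 0 = -((n : ℝ) ^ 4) := by
    simp [uPt, vPt, mk2]
  have h1 : (uPt i - vPt n j) 1 = (i : ℝ) - (j : ℝ) * n := by
    simp [uPt, vPt, mk2]
  rw [h0, h1]
  simp [Real.norm_eq_abs, sq_abs]
  ring

end
end SqrtIndep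

section Assembly

open Finset

/-- The integer distance parameter of the edge `u_i v_{σ(i)+1}`. -/
def dval (n : ℕ) (σ : Equiv.Perm (Fin n)) (i : Fin n) : ℕ := ((σ i : ℕ) + 1) * n - (i : ℕ)

lemma dval_le_cast {n : ℕ} (σ : Equiv.Perm (Fin n)) (i : Fin n) :
    (i : ℕ) ≤ ((σ i : ℕ) + 1) * n :=
  le_trans (le_of_lt i.isLt) (Nat.le_mul_of_pos_left n (Nat.succ_pos _))

lemma dval_pos {n : ℕ} (σ : Equiv.Perm (Fin n)) (i : Fin n) : 1 ≤ dval n σ i := by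
  have h1 : (i : ℕ) < n := i.isLt
  have h2 : n ≤ ((σ i : ℕ) + 1) * n := Nat.le_mul_of_pos_left n (Nat.succ_pos _)
  unfold dval
  omega

lemma dval_le {n : ℕ} (σ : Equiv.Perm (Fin n)) (i : Fin n) : dval n σ i ≤ n * n := by
  have h2 : ((σ i : ℕ) + 1) * n ≤ n * n :=
    Nat.mul_le_mul_right n (by have := (σ i).isLt; omega)
  unfold dval
  omega

lemma dval_inj {n : ℕ} (σ τ : Equiv.Perm (Fin n)) (i i' : Fin n)
    (h : dval n σ i = dval n τ i') : i = i' ∧ σ i = τ i' := by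
  unfold dval at h
  have hle1 := dval_le_cast σ i
  have hle2 := dval_le_cast τ i'
  have key : n * ((σ i : ℕ) + 1) + (i' : ℕ) = n * ((τ i' : ℕ) + 1) + (i : ℕ) := by
    rw [mul_comm n _, mul_comm n _]
    omega
  have hi : (i : ℕ) = (i' : ℕ) := by
    have h1 : (n * ((σ i : ℕ) + 1) + (i' : ℕ)) % n = (i' : ℕ) % n := Nat.mul_add_mod n _ _
    have h2 : (n * ((τ i' : ℕ) + 1) + (i : ℕ)) % n = (i : ℕ) % n := Nat.mul_add_mod n _ _
    rw [key, h2] at h1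
    rwa [Nat.mod_eq_of_lt i.isLt, Nat.mod_eq_of_lt i'.isLt] at h1
  have hii' : i = i' := Fin.ext hi
  refine ⟨hii', ?_⟩
  subst hii'
  have hn : 0 < n := Fin.pos i
  have : ((σ i : ℕ) + 1) * n = ((τ i : ℕ) + 1) * n := by
    rw [mul_comm _ n, mul_comm _ n]
    omega
  have h3 : (σ i : ℕ) + 1 = (τ i : ℕ) + 1 := Nat.eq_of_mul_eq_mul_right hn this
  exact Fin.ext (by omega)

lemma matchWeight_eq_sum_image {n : ℕ} (σ : Equiv.Perm (Fin n)) :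
    matchWeight n σ
      = ∑ d ∈ Finset.image (dval n σ) Finset.univ,
          Real.sqrt (((n ^ 4) ^ 2 + d ^ 2 : ℕ) : ℝ) := by
  rw [Finset.sum_image (fun i _ i' _ h => (dval_inj σ σ i i' h).1)]
  unfold matchWeight
  refine Finset.sum_congr rfl ?_
  intro i _
  rw [norm_uv]
  congr 1
  have hle := dval_le_cast σ i
  have hcast : ((dval n σ i : ℕ) : ℝ) = ((σ i : ℕ) + 1 : ℝ) * n - (i : ℕ) := by
    unfold dval
    push_cast [Nat.cast_sub hle]
    ring
  push_cast
  try rw [hcast]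
  try ring

end Assembly

/-- In Construction 1, all perfect matchings have pairwise distinct weights. -/
theorem stmt_4 (n : ℕ) (hn : 1 ≤ n) (σ τ : Equiv.Perm (Fin n)) (hστ : σ ≠ τ) :
    matchWeight n σ ≠ matchWeight n τ := by
  classical
  intro heq
  set g : ℕ → ℕ := fun d => (n ^ 4) ^ 2 + d ^ 2 with hg
  set Aσ : Finset ℕ := Finset.image (dval n σ) Finset.univ with hAσ
  set Aτ : Finset ℕ := Finset.image (dval n τ) Finset.univ with hAτ
  set U : Finset ℕ := Aσ ∪ Aτ with hU
  have hbound : ∀ d ∈ U, 1 ≤ d ∧ d ≤ n * n := by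
    intro d hd
    rcases Finset.mem_union.mp hd with h | h
    · obtain ⟨i, _, rfl⟩ := Finset.mem_image.mp h
      exact ⟨dval_pos σ i, dval_le σ i⟩
    · obtain ⟨i, _, rfl⟩ := Finset.mem_image.mp h
      exact ⟨dval_pos τ i, dval_le τ i⟩
  have hQ1 : 1 ≤ n ^ 4 := Nat.one_le_pow _ _ hn
  have hdsq : ∀ d ∈ U, 1 ≤ d ^ 2 ∧ d ^ 2 ≤ n ^ 4 := by
    intro d hd
    obtain ⟨h1, h2⟩ := hbound d hd
    constructor
    · nlinarith
    · nlinarith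
  have h1 : ∀ d ∈ U, ¬ IsSquare (g d) := by
    intro d hd
    obtain ⟨ha, hb⟩ := hdsq d hd
    exact nonsquare_single hQ1 ha hb
  have h2 : ∀ s ∈ U, ∀ t ∈ U, s ≠ t → ¬ IsSquare (g s * g t) := by
    intro s hs t ht hst
    obtain ⟨ha1, hb1⟩ := hdsq s hs
    obtain ⟨ha2, hb2⟩ := hdsq t ht
    have hst2 : s ^ 2 ≠ t ^ 2 := by
      intro hc
      exact hst (Nat.pow_left_injective (by norm_num) hc)
    rcases Nat.lt_or_ge (s ^ 2) (t ^ 2) with h | h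
    · exact nonsquare_prod hQ1 ha1 h hb2
    · have hlt : t ^ 2 < s ^ 2 := lt_of_le_of_ne h (Ne.symm hst2)
      intro hc
      rw [mul_comm] at hc
      exact nonsquare_prod hQ1 ha2 hlt hb1 hc
  set c : ℕ → ℤ := fun d => (if d ∈ Aσ then (1 : ℤ) else 0) - (if d ∈ Aτ then (1 : ℤ) else 0)
    with hc
  have hsplit : ∀ A : Finset ℕ, A ⊆ U →
      ∑ d ∈ U, (if d ∈ A then (1 : ℝ) else 0) * Real.sqrt ((g d : ℕ) : ℝ)
        = ∑ d ∈ A, Real.sqrt ((g d : ℕ) : ℝ) := by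
    intro A hA
    simp only [ite_mul, one_mul, zero_mul]
    rw [← Finset.sum_filter]
    congr 1
    ext d
    simp only [Finset.mem_filter]
    exact ⟨fun h => h.2, fun h => ⟨hA h, h⟩⟩
  have hsum : ∑ d ∈ U, (c d : ℝ) * Real.sqrt ((g d : ℕ) : ℝ) = 0 := by
    have hexp : ∀ d ∈ U, (c d : ℝ) * Real.sqrt ((g d : ℕ) : ℝ)
        = (if d ∈ Aσ then (1 : ℝ) else 0) * Real.sqrt ((g d : ℕ) : ℝ)
          - (if d ∈ Aτ then (1 : ℝ) else 0) * Real.sqrt ((g d : ℕ) : ℝ) := by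
      intro d _
      rw [hc]
      push_cast
      split_ifs <;> ring
    rw [Finset.sum_congr rfl hexp, Finset.sum_sub_distrib,
      hsplit Aσ Finset.subset_union_left, hsplit Aτ Finset.subset_union_right]
    have e1 := matchWeight_eq_sum_image σ
    have e2 := matchWeight_eq_sum_image τ
    rw [e1, e2] at heq
    rw [hg]
    simpa using sub_eq_zero_of_eq heq
  have hzero := sqrt_linindep U g h1 h2 c hsum
  obtain ⟨i, hi⟩ : ∃ i, σ i ≠ τ i := by
    by_contra hcon
    push_neg at hcon
    exact hστ (Equiv.ext hcon)
  set d₀ := dval n σ i with hd₀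
  have hd₀σ : d₀ ∈ Aσ := Finset.mem_image.mpr ⟨i, Finset.mem_univ i, rfl⟩
  have hd₀τ : d₀ ∉ Aτ := by
    intro hmem
    obtain ⟨i', _, hi'⟩ := Finset.mem_image.mp hmem
    obtain ⟨h3, h4⟩ := dval_inj τ σ i' i hi'
    exact hi (h3 ▸ h4).symm
  have := hzero d₀ (Finset.mem_union_left _ hd₀σ)
  rw [hc] at this
  simp only [hd₀σ, hd₀τ, if_true, if_false] at this
  omega
end

section
/- Let n ≥ 1 be an integer and set q = n⁴. If Δ and Δ' are integers with 1 ≤ Δ < Δ' ≤ n², then the integer (q² + Δ²)(q² + Δ'²) is not the square of an integer; consequently, the real numbers √(q² + Δ²) and √(q² + Δ'²) are linearly independent over ℚ. -/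
theorem not_sq_aux (n : ℕ) (hn : 1 ≤ n) (Δ Δ' : ℤ)
    (h1 : 1 ≤ Δ) (h2 : Δ < Δ') (h3 : Δ' ≤ (n : ℤ) ^ 2) :
    ¬ ∃ t : ℤ, (((n : ℤ) ^ 4) ^ 2 + Δ ^ 2) * (((n : ℤ) ^ 4) ^ 2 + Δ' ^ 2) = t ^ 2 := by
  rintro ⟨t, ht⟩
  set q : ℤ := (n : ℤ) ^ 4 with hq
  have hd : Δ' - Δ ≥ 1 := by omega
  have hdn : Δ' - Δ ≤ (n : ℤ) ^ 2 - 1 := by omega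
  have hn1 : (1 : ℤ) ≤ (n : ℤ) := by exact_mod_cast hn
  have hq1 : (1 : ℤ) ≤ q := by nlinarith [pow_pos (by linarith : (0:ℤ) < (n:ℤ)) 4]
  -- key bounds for 4 * product
  have key1 : (2 * q ^ 2 + (Δ ^ 2 + Δ' ^ 2) - 1) ^ 2 < 4 * (q ^ 2 + Δ ^ 2) * (q ^ 2 + Δ' ^ 2) := by
    have e1 : ((Δ' - Δ) ^ 2 - 1) * ((Δ' + Δ) ^ 2 - 1) < 4 * q ^ 2 := by
      have b1 : (Δ' - Δ) ^ 2 - 1 ≤ (n : ℤ) ^ 4 - 1 := by nlinarith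
      have b2 : (Δ' + Δ) ^ 2 - 1 ≤ 4 * (n : ℤ) ^ 4 - 1 := by nlinarith
      have b0 : (0 : ℤ) ≤ (Δ' - Δ) ^ 2 - 1 := by nlinarith
      have b3 : (0 : ℤ) ≤ (Δ' + Δ) ^ 2 - 1 := by nlinarith
      have hq2 : q ^ 2 = (n : ℤ) ^ 8 := by rw [hq]; ring
      nlinarith [mul_le_mul b1 b2 b3 (by nlinarith : (0:ℤ) ≤ (n:ℤ)^4 - 1), pow_pos (by linarith : (0:ℤ) < (n:ℤ)) 4, pow_pos (by linarith : (0:ℤ) < (n:ℤ)) 8]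
    nlinarith [e1]
  have key2 : 4 * (q ^ 2 + Δ ^ 2) * (q ^ 2 + Δ' ^ 2) < (2 * q ^ 2 + (Δ ^ 2 + Δ' ^ 2)) ^ 2 := by
    nlinarith [sq_nonneg (Δ' ^ 2 - Δ ^ 2), sq_pos_of_ne_zero (a := Δ' ^ 2 - Δ ^ 2) (by nlinarith)]
  -- so 2|t| strictly between consecutive integers
  have ht4 : 4 * (q ^ 2 + Δ ^ 2) * (q ^ 2 + Δ' ^ 2) = (2 * |t|) ^ 2 := by
    rw [mul_pow, sq_abs]
    linarith [ht]
  set N := 2 * q ^ 2 + (Δ ^ 2 + Δ' ^ 2)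
  have hlt1 : N - 1 < 2 * |t| :=
    lt_of_pow_lt_pow_left₀ 2 (by positivity) (by rw [← ht4]; exact key1)
  have hlt2 : 2 * |t| < N := by
    have hN0 : (0 : ℤ) ≤ N := by positivity
    exact lt_of_pow_lt_pow_left₀ 2 hN0 (by rw [← ht4]; exact key2)
  omega

/-- For `q = n⁴` and integers `1 ≤ Δ < Δ' ≤ n²`, the integer `(q² + Δ²)(q² + Δ'²)` is not a
perfect square; consequently `√(q² + Δ²)` and `√(q² + Δ'²)` are linearly independent over `ℚ`. -/
theorem stmt_5 (n : ℕ) (hn : 1 ≤ n) (Δ Δ' : ℤ)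
    (h1 : 1 ≤ Δ) (h2 : Δ < Δ') (h3 : Δ' ≤ (n : ℤ) ^ 2) :
    (¬ ∃ t : ℤ, (((n : ℤ) ^ 4) ^ 2 + Δ ^ 2) * (((n : ℤ) ^ 4) ^ 2 + Δ' ^ 2) = t ^ 2) ∧
    (∀ a b : ℚ,
      (a : ℝ) * Real.sqrt (((n : ℝ) ^ 4) ^ 2 + (Δ : ℝ) ^ 2)
        + (b : ℝ) * Real.sqrt (((n : ℝ) ^ 4) ^ 2 + (Δ' : ℝ) ^ 2) = 0 →
      a = 0 ∧ b = 0) := by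
  have hns := not_sq_aux n hn Δ Δ' h1 h2 h3
  refine ⟨hns, ?_⟩
  intro a b h
  set A : ℤ := ((n : ℤ) ^ 4) ^ 2 + Δ ^ 2 with hA
  set B : ℤ := ((n : ℤ) ^ 4) ^ 2 + Δ' ^ 2 with hB
  have hApos : (0 : ℤ) < A := by positivity
  have hBpos : (0 : ℤ) < B := by nlinarith
  have hsq : ¬ IsSquare (A * B) := by
    rintro ⟨r, hr⟩
    exact hns ⟨r, by rw [hr]; ring⟩
  have hirr : Irrational (Real.sqrt ((A * B : ℤ) : ℝ)) :=
    (irrational_sqrt_intCast_iff_of_nonneg (by positivity)).mpr hsq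
  have hcA : (((n : ℝ) ^ 4) ^ 2 + (Δ : ℝ) ^ 2) = ((A : ℤ) : ℝ) := by simp only [hA]; push_cast; ring
  have hcB : (((n : ℝ) ^ 4) ^ 2 + (Δ' : ℝ) ^ 2) = ((B : ℤ) : ℝ) := by simp only [hB]; push_cast; ring
  rw [hcA, hcB] at h
  have hAr : (0 : ℝ) ≤ (A : ℝ) := by exact_mod_cast hApos.le
  have hBr : (0 : ℝ) ≤ (B : ℝ) := by exact_mod_cast hBpos.le
  have hmul : Real.sqrt ((A : ℝ)) * Real.sqrt ((B : ℝ)) = Real.sqrt ((A * B : ℤ) : ℝ) := by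
    rw [← Real.sqrt_mul hAr]; push_cast; ring_nf
  have hBB : Real.sqrt ((B : ℝ)) * Real.sqrt ((B : ℝ)) = (B : ℝ) :=
    Real.mul_self_sqrt hBr
  have ha : a = 0 := by
    by_contra ha0
    have h2' : (a : ℝ) * Real.sqrt ((A * B : ℤ) : ℝ) + (b : ℝ) * (B : ℝ) = 0 := by
      have := congrArg (· * Real.sqrt ((B : ℝ))) h
      simp only [add_mul, mul_assoc, hmul, hBB, zero_mul] at this
      linarith [this]
    have haR : (a : ℝ) ≠ 0 := by exact_mod_cast ha0
    have hq' : ((-b * (B : ℚ) / a : ℚ) : ℝ) = (-(b : ℝ) * (B : ℝ)) / (a : ℝ) := by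
      push_cast; ring
    have : Real.sqrt ((A * B : ℤ) : ℝ) = ((-b * (B : ℚ) / a : ℚ) : ℝ) := by
      rw [hq', eq_div_iff haR]
      linear_combination h2'
    exact hirr ⟨_, this.symm⟩
  have hb : b = 0 := by
    rw [ha] at h
    have hBsqrt : (0 : ℝ) < Real.sqrt ((B : ℝ)) :=
      Real.sqrt_pos.mpr (by exact_mod_cast hBpos)
    have : (b : ℝ) * Real.sqrt ((B : ℝ)) = 0 := by
      simpa using h
    rcases mul_eq_zero.mp this with hb0 | hs0
    · exact_mod_cast hb0
    · exact absurd hs0 hBsqrt.ne'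
  exact ⟨ha, hb⟩
end

section
/- Let n ≥ 1 be an integer and set q = n⁴. The family of real numbers (√(q² + Δ²))_{Δ = 1, …, n²} is linearly independent over ℚ. -/
open Real Finset

/-- The subfield of `ℝ` generated by the square roots of the elements of `T`. -/
noncomputable def sqF (T : Finset ℕ) : Subfield ℝ :=
  Subfield.closure ((fun q : ℕ => Real.sqrt q) '' (T : Set ℕ))

lemma sqrt_mem_sqF {T : Finset ℕ} {q : ℕ} (hq : q ∈ T) :
    Real.sqrt q ∈ sqF T :=
  Subfield.subset_closure ⟨q, by simpa using hq, rfl⟩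

lemma natCast_mem_sqF (T : Finset ℕ) (m : ℕ) : (m : ℝ) ∈ sqF T := by
  have := (sqF T).intCast_mem (m : ℤ)
  simpa using this

lemma ratCast_mem_sqF (T : Finset ℕ) (c : ℚ) : (c : ℝ) ∈ sqF T := by
  rw [Rat.cast_def]
  exact (sqF T).div_mem (by simpa using (sqF T).intCast_mem c.num)
    (natCast_mem_sqF T c.den)

/-- If `x + y·a` has square in `F`, with `x,y ∈ F`, `a² ∈ F`, `a ∉ F`, then `y = 0` or `x = 0`. -/
lemma quad_cases (F : Subfield ℝ) {a : ℝ} (ha2 : a * a ∈ F) (ha : a ∉ F)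
    {x y : ℝ} (hx : x ∈ F) (hy : y ∈ F)
    (hb : (x + y * a) * (x + y * a) ∈ F) :
    y = 0 ∨ x = 0 := by
  have h1 : x * x + y * y * (a * a) ∈ F :=
    F.add_mem (F.mul_mem hx hx) (F.mul_mem (F.mul_mem hy hy) ha2)
  have h2 : (2 * x * y) * a ∈ F := by
    have e : (2 * x * y) * a = (x + y * a) * (x + y * a) - (x * x + y * y * (a * a)) := by ring
    rw [e]; exact F.sub_mem hb h1
  by_contra h
  push_neg at h
  obtain ⟨hy0, hx0⟩ := h
  have htwo : (2 : ℝ) ∈ F := by simpa using F.intCast_mem 2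
  have hne : (2 * x * y) ≠ 0 := mul_ne_zero (mul_ne_zero two_ne_zero hx0) hy0
  have hmem : (2 * x * y)⁻¹ * ((2 * x * y) * a) ∈ F :=
    F.mul_mem (F.inv_mem (F.mul_mem (F.mul_mem htwo hx) hy)) h2
  rw [inv_mul_cancel_left₀ hne] at hmem
  exact ha hmem

/-- The quadratic extension `F + F·a` as a subfield of `ℝ`. -/
noncomputable def extF (F : Subfield ℝ) (a : ℝ) (ha2 : a * a ∈ F) (ha : a ∉ F) :
    Subfield ℝ where
  carrier := {w | ∃ x ∈ F, ∃ y ∈ F, w = x + y * a}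
  zero_mem' := ⟨0, F.zero_mem, 0, F.zero_mem, by ring⟩
  one_mem' := ⟨1, F.one_mem, 0, F.zero_mem, by ring⟩
  add_mem' := by
    rintro u v ⟨x, hx, y, hy, rfl⟩ ⟨x', hx', y', hy', rfl⟩
    exact ⟨x + x', F.add_mem hx hx', y + y', F.add_mem hy hy', by ring⟩
  neg_mem' := by
    rintro u ⟨x, hx, y, hy, rfl⟩
    exact ⟨-x, F.neg_mem hx, -y, F.neg_mem hy, by ring⟩
  mul_mem' := by
    rintro u v ⟨x, hx, y, hy, rfl⟩ ⟨x', hx', y', hy', rfl⟩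
    refine ⟨x * x' + y * y' * (a * a),
      F.add_mem (F.mul_mem hx hx') (F.mul_mem (F.mul_mem hy hy') ha2),
      x * y' + y * x', F.add_mem (F.mul_mem hx hy') (F.mul_mem hy hx'), by ring⟩
  inv_mem' := by
    rintro w ⟨x, hx, y, hy, rfl⟩
    by_cases hw : x + y * a = 0
    · rw [hw]
      exact ⟨0, F.zero_mem, 0, F.zero_mem, by simp⟩
    · set D : ℝ := x * x - y * y * (a * a) with hD
      have hD0 : D ≠ 0 := by
        intro h0
        have hxx : x * x = (y * a) * (y * a) := by
          have : x * x - y * y * (a * a) = 0 := h0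
          nlinarith [this]
        rcases mul_self_eq_mul_self_iff.1 hxx with h | h
        · -- x = y * a
          rcases eq_or_ne y 0 with hy0 | hy0
          · apply hw; rw [h, hy0]; ring
          · apply ha
            have : a = y⁻¹ * x := by
              rw [h]; field_simp
            rw [this]; exact F.mul_mem (F.inv_mem hy) hx
        · -- x = -(y * a)
          rcases eq_or_ne y 0 with hy0 | hy0
          · apply hw; rw [h, hy0]; ring
          · apply ha
            have : a = -(y⁻¹ * x) := by
              rw [h]; field_simp
            rw [this]; exact F.neg_mem (F.mul_mem (F.inv_mem hy) hx)
      have hDmem : D ∈ F :=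
        F.sub_mem (F.mul_mem hx hx) (F.mul_mem (F.mul_mem hy hy) ha2)
      have key : (x + y * a)⁻¹ = x * D⁻¹ + (-(y * D⁻¹)) * a := by
        have h1 : (x + y * a) * (x * D⁻¹ + (-(y * D⁻¹)) * a) = 1 := by
          have : (x + y * a) * (x * D⁻¹ + (-(y * D⁻¹)) * a)
              = (x * x - y * y * (a * a)) * D⁻¹ := by ring
          rw [this, ← hD, mul_inv_cancel₀ hD0]
        exact inv_eq_of_mul_eq_one_right h1
      exact ⟨x * D⁻¹, F.mul_mem hx (F.inv_mem hDmem),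
        -(y * D⁻¹), F.neg_mem (F.mul_mem hy (F.inv_mem hDmem)), key⟩

lemma mem_insert_decomp {T : Finset ℕ} {p : ℕ}
    (hp2 : Real.sqrt p * Real.sqrt p ∈ sqF T)
    (hp : Real.sqrt p ∉ sqF T) {w : ℝ} (hw : w ∈ sqF (insert p T)) :
    ∃ x ∈ sqF T, ∃ y ∈ sqF T, w = x + y * Real.sqrt p := by
  have hle : sqF (insert p T) ≤ extF (sqF T) (Real.sqrt p) hp2 hp := by
    rw [sqF, Subfield.closure_le]
    rintro _ ⟨q, hq, rfl⟩
    simp only [Finset.coe_insert, Set.mem_insert_iff, Finset.mem_coe] at hq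
    rcases hq with rfl | hq
    · exact ⟨0, (sqF T).zero_mem, 1, (sqF T).one_mem, by ring⟩
    · exact ⟨Real.sqrt q, sqrt_mem_sqF hq, 0, (sqF T).zero_mem, by ring⟩
  exact hle hw

lemma sqrt_nat_mem_sqF {T : Finset ℕ} :
    ∀ m : ℕ, Squarefree m → (∀ q : ℕ, q.Prime → q ∣ m → q ∈ T) →
    Real.sqrt m ∈ sqF T := by
  intro m
  induction m using Nat.strong_induction_on with
  | _ m ih =>
    intro hm hq
    rcases eq_or_ne m 1 with rfl | h1
    · simpa using (sqF T).one_mem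
    obtain ⟨q, hqp, e, rfl⟩ := Nat.exists_prime_and_dvd h1
    have he0 : e ≠ 0 := by
      intro h; rw [h, mul_zero] at hm; exact hm.ne_zero rfl
    have hsqrtmul : Real.sqrt ((q * e : ℕ) : ℝ) = Real.sqrt q * Real.sqrt e := by
      rw [Nat.cast_mul]
      exact Real.sqrt_mul (Nat.cast_nonneg q) e
    rw [hsqrtmul]
    refine (sqF T).mul_mem (sqrt_mem_sqF (hq q hqp (Dvd.intro e rfl))) ?_
    refine ih e ?_ (hm.squarefree_of_dvd (Dvd.intro_left q rfl))
      (fun r hr hre => hq r hr (hre.mul_left q))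
    calc e < q * e := (Nat.lt_mul_iff_one_lt_left (Nat.pos_of_ne_zero he0)).2 hqp.one_lt
    
theorem sqrt_notMem_sqF :
    ∀ (T : Finset ℕ), (∀ q ∈ T, q.Prime) →
    ∀ d : ℕ, Squarefree d → ∀ q : ℕ, q.Prime → q ∣ d → q ∉ T →
    Real.sqrt d ∉ sqF T := by
  intro T
  induction T using Finset.induction_on with
  | empty =>
    intro _ d hd q hq hqd _ hmem
    have h1 : sqF ∅ ≤ (Rat.castHom ℝ).fieldRange := by
      rw [sqF, Subfield.closure_le]
      simp
    obtain ⟨r, hr⟩ := RingHom.mem_fieldRange.1 (h1 hmem)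
    have hirr : Irrational (Real.sqrt d) := by
      rw [irrational_sqrt_natCast_iff]
      rintro ⟨k, hk⟩
      have hku : IsUnit k := hd k (by rw [hk])
      have : d = 1 := by rw [hk, Nat.isUnit_iff.1 hku]
      rw [this] at hqd
      exact hq.one_lt.ne' (Nat.eq_one_of_dvd_one hqd)
    exact hirr ⟨r, hr⟩
  | @insert p T hpT ih =>
    intro hprime d hd q hq hqd hqT hmem
    have hTprime : ∀ r ∈ T, r.Prime := fun r hr => hprime r (mem_insert_of_mem hr)
    have hpprime : p.Prime := hprime p (mem_insert_self p T)
    have hpF : Real.sqrt p ∉ sqF T :=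
      ih hTprime p hpprime.squarefree p hpprime dvd_rfl hpT
    have hp2 : Real.sqrt p * Real.sqrt p ∈ sqF T := by
      rw [Real.mul_self_sqrt (Nat.cast_nonneg p)]
      exact natCast_mem_sqF T p
    obtain ⟨x, hx, y, hy, hxy⟩ := mem_insert_decomp hp2 hpF hmem
    have hqp : q ≠ p := fun h => hqT (h ▸ mem_insert_self p T)
    have hqT' : q ∉ T := fun h => hqT (mem_insert_of_mem h)
    have hb2 : (x + y * Real.sqrt p) * (x + y * Real.sqrt p) ∈ sqF T := by
      rw [← hxy, Real.mul_self_sqrt (Nat.cast_nonneg d)]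
      exact natCast_mem_sqF T d
    rcases quad_cases (sqF T) hp2 hpF hx hy hb2 with h0 | h0
    · -- y = 0 : √d ∈ sqF T
      have : Real.sqrt d ∈ sqF T := by
        rw [hxy, h0]; simpa using hx
      exact ih hTprime d hd q hq hqd hqT' this
    · -- x = 0 : √d = y √p, so √(p d) ∈ sqF T
      have hpd : Real.sqrt ((p * d : ℕ) : ℝ) ∈ sqF T := by
        have hsplit : Real.sqrt ((p * d : ℕ) : ℝ) = Real.sqrt p * Real.sqrt d := by
          rw [Nat.cast_mul]
          exact Real.sqrt_mul (Nat.cast_nonneg p) d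
        rw [hsplit, hxy, h0, zero_add]
        have : Real.sqrt p * (y * Real.sqrt p) = y * (Real.sqrt p * Real.sqrt p) := by ring
        rw [this]
        exact (sqF T).mul_mem hy hp2
      by_cases hcase : p ∣ d
      · obtain ⟨e, rfl⟩ := hcase
        have hpe : Real.sqrt ((p * (p * e) : ℕ) : ℝ) = p * Real.sqrt e := by
          push_cast
          rw [show ((p : ℝ) * ((p : ℝ) * (e : ℝ))) = ((p : ℝ))^2 * (e : ℝ) by ring,
            Real.sqrt_mul (by positivity), Real.sqrt_sq (Nat.cast_nonneg p)]
        rw [hpe] at hpd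
        have hp0 : (p : ℝ) ≠ 0 := Nat.cast_ne_zero.2 hpprime.ne_zero
        have he : Real.sqrt e ∈ sqF T := by
          have := (sqF T).mul_mem ((sqF T).inv_mem (natCast_mem_sqF T p)) hpd
          rwa [inv_mul_cancel_left₀ hp0] at this
        have hqe : q ∣ e := by
          rcases (Nat.Prime.dvd_mul hq).1 hqd with h | h
          · exact absurd ((Nat.prime_dvd_prime_iff_eq hq hpprime).1 h) hqp
          · exact h
        exact ih hTprime e (hd.squarefree_of_dvd (Dvd.intro_left p rfl)) q hq hqe hqT' he
      · have hcop : Nat.Coprime p d := (Nat.Prime.coprime_iff_not_dvd hpprime).2 hcase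
        have hsf : Squarefree (p * d) := (Nat.squarefree_mul hcop).2 ⟨hpprime.squarefree, hd⟩
        exact ih hTprime (p * d) hsf q hq (hqd.mul_left p) hqT' hpd

theorem sqrt_indep :
    ∀ (T : Finset ℕ), (∀ q ∈ T, q.Prime) →
    ∀ (s : Finset ℕ) (c : ℕ → ℚ),
    (∀ d ∈ s, Squarefree d ∧ ∀ q : ℕ, q.Prime → q ∣ d → q ∈ T) →
    ∑ d ∈ s, (c d : ℝ) * Real.sqrt d = 0 → ∀ d ∈ s, c d = 0 := by
  intro T
  induction T using Finset.induction_on with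
  | empty =>
    intro _ s c hs hsum d hd
    have hone : ∀ e ∈ s, e = 1 := by
      intro e he
      by_contra h1
      obtain ⟨q, hq, hqd⟩ := Nat.exists_prime_and_dvd h1
      exact absurd ((hs e he).2 q hq hqd) (notMem_empty q)
    have hs1 : s ⊆ {1} := fun x hx => mem_singleton.2 (hone x hx)
    rcases Finset.subset_singleton_iff.1 hs1 with rfl | rfl
    · exact absurd hd (notMem_empty d)
    · have hd1 : d = 1 := mem_singleton.1 hd
      subst hd1
      simp only [Finset.sum_singleton, Nat.cast_one, Real.sqrt_one, mul_one] at hsum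
      exact_mod_cast hsum
  | @insert p T hpT ih =>
    intro hprime s c hs hsum
    have hTprime : ∀ r ∈ T, r.Prime := fun r hr => hprime r (mem_insert_of_mem hr)
    have hpprime : p.Prime := hprime p (mem_insert_self p T)
    classical
    set s₂ : Finset ℕ := s.filter (fun d => p ∣ d) with hs₂def
    set s₁ : Finset ℕ := s.filter (fun d => ¬ p ∣ d) with hs₁def
    set A : ℝ := ∑ d ∈ s₁, (c d : ℝ) * Real.sqrt d with hA
    set B : ℝ := ∑ d ∈ s₂, (c d : ℝ) * Real.sqrt (d / p : ℕ) with hB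
    have hmemprop : ∀ d ∈ s₁, Squarefree d ∧ ∀ q : ℕ, q.Prime → q ∣ d → q ∈ T := by
      intro d hd
      obtain ⟨hds, hpd⟩ := Finset.mem_filter.1 hd
      refine ⟨(hs d hds).1, fun q hq hqd => ?_⟩
      rcases mem_insert.1 ((hs d hds).2 q hq hqd) with rfl | h
      · exact absurd hqd hpd
      · exact h
    -- facts about s₂
    have hs₂fact : ∀ d ∈ s₂, p * (d / p) = d ∧ Squarefree (d / p) ∧ ¬ p ∣ (d / p) ∧
        (∀ q : ℕ, q.Prime → q ∣ (d / p) → q ∈ T) := by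
      intro d hd
      obtain ⟨hds, hpd⟩ := Finset.mem_filter.1 hd
      have heq : p * (d / p) = d := Nat.mul_div_cancel' hpd
      have hsf : Squarefree (d / p) :=
        (hs d hds).1.squarefree_of_dvd (Nat.div_dvd_of_dvd hpd)
      have hnp : ¬ p ∣ (d / p) := by
        intro hpp
        have : p * p ∣ d := by
          rw [← heq]
          exact mul_dvd_mul_left p hpp
        exact hpprime.not_isUnit ((hs d hds).1 p this)
      refine ⟨heq, hsf, hnp, fun q hq hqd => ?_⟩
      have hqdd : q ∣ d := hqd.trans (Nat.div_dvd_of_dvd hpd)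
      rcases mem_insert.1 ((hs d hds).2 q hq hqdd) with rfl | h
      · exact absurd hqd hnp
      · exact h
    -- the sum splits as A + √p · B
    have hsplit : A + Real.sqrt p * B = 0 := by
      rw [← hsum, hA, hB, Finset.mul_sum]
      rw [← Finset.sum_filter_add_sum_filter_not s (fun d => p ∣ d) (fun d => (c d : ℝ) * Real.sqrt d)]
      rw [add_comm]
      congr 1
      apply Finset.sum_congr rfl
      intro d hd
      obtain ⟨heq, _, _, _⟩ := hs₂fact d hd
      have : Real.sqrt d = Real.sqrt p * Real.sqrt (d / p : ℕ) := by
        conv_lhs => rw [← heq]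
        rw [Nat.cast_mul]
        exact Real.sqrt_mul (Nat.cast_nonneg p) _
      rw [this]; ring
    have hAmem : A ∈ sqF T := by
      refine Subfield.sum_mem _ (fun d hd => (sqF T).mul_mem (ratCast_mem_sqF T (c d)) ?_)
      exact sqrt_nat_mem_sqF d (hmemprop d hd).1 (hmemprop d hd).2
    have hBmem : B ∈ sqF T := by
      refine Subfield.sum_mem _ (fun d hd => (sqF T).mul_mem (ratCast_mem_sqF T (c d)) ?_)
      obtain ⟨_, hsf, _, hfac⟩ := hs₂fact d hd
      exact sqrt_nat_mem_sqF (d / p) hsf hfac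
    have hpF : Real.sqrt p ∉ sqF T :=
      sqrt_notMem_sqF T hTprime p hpprime.squarefree p hpprime dvd_rfl hpT
    have hB0 : B = 0 := by
      by_contra hB0
      apply hpF
      have : Real.sqrt p = -A / B := by
        field_simp
        linarith [hsplit]
      rw [this]
      exact (sqF T).div_mem ((sqF T).neg_mem hAmem) hBmem
    have hA0 : A = 0 := by
      rw [hB0, mul_zero, add_zero] at hsplit
      exact hsplit
    -- coefficients on s₁ vanish
    have hc1 : ∀ d ∈ s₁, c d = 0 := ih hTprime s₁ c hmemprop hA0
    -- coefficients on s₂ vanish, via reindexing by division by p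
    have hinj : ∀ x ∈ s₂, ∀ y ∈ s₂, x / p = y / p → x = y := by
      intro x hx y hy hxy
      rw [← (hs₂fact x hx).1, ← (hs₂fact y hy).1, hxy]
    have hBsum : ∑ e ∈ s₂.image (· / p), ((c (p * e) : ℝ) * Real.sqrt e) = B := by
      rw [Finset.sum_image hinj, hB]
      apply Finset.sum_congr rfl
      intro d hd
      rw [(hs₂fact d hd).1]
    have hc2' : ∀ e ∈ s₂.image (· / p), c (p * e) = 0 := by
      apply ih hTprime (s₂.image (· / p)) (fun e => c (p * e))
      · intro e he
        obtain ⟨d, hd, rfl⟩ := Finset.mem_image.1 he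
        obtain ⟨_, hsf, _, hfac⟩ := hs₂fact d hd
        exact ⟨hsf, hfac⟩
      · rw [hBsum]; exact hB0
    intro d hd
    by_cases hpd : p ∣ d
    · have hd2 : d ∈ s₂ := Finset.mem_filter.2 ⟨hd, hpd⟩
      have := hc2' (d / p) (Finset.mem_image_of_mem _ hd2)
      rwa [(hs₂fact d hd2).1] at this
    · exact hc1 d (Finset.mem_filter.2 ⟨hd, hpd⟩)

/-- For `q = n⁴`, the family `(√(q² + Δ²))_{Δ = 1, …, n²}` of real numbers is linearly
independent over `ℚ` (indexing `Δ = (d : Fin (n²)) + 1`). -/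
theorem stmt_6 (n : ℕ) (hn : 1 ≤ n) :
    LinearIndependent ℚ (fun d : Fin (n ^ 2) =>
      Real.sqrt (((n : ℝ) ^ 4) ^ 2 + (((d : ℕ) + 1 : ℕ) : ℝ) ^ 2)) := by
  classical
  set N : Fin (n ^ 2) → ℕ := fun d => n ^ 8 + ((d : ℕ) + 1) ^ 2 with hN
  have hfun : ∀ d : Fin (n ^ 2),
      (((n : ℝ) ^ 4) ^ 2 + (((d : ℕ) + 1 : ℕ) : ℝ) ^ 2) = ((N d : ℕ) : ℝ) := by
    intro d; rw [hN]; push_cast; ring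
  choose a b hab hsf using fun d => Nat.sq_mul_squarefree (N d)
  -- basic positivity facts
  have hNlb : ∀ d, (n ^ 4) ^ 2 < N d := by
    intro d
    have : 0 < ((d : ℕ) + 1) ^ 2 := by positivity
    have hNd : N d = n ^ 8 + ((d : ℕ) + 1) ^ 2 := rfl
    have he : (n ^ 4) ^ 2 = n ^ 8 := by ring
    omega
  have hNub : ∀ d, N d ≤ n ^ 8 + n ^ 4 := by
    intro d
    have hd1 : (d : ℕ) + 1 ≤ n ^ 2 := d.2
    have : ((d : ℕ) + 1) ^ 2 ≤ (n ^ 2) ^ 2 := Nat.pow_le_pow_left hd1 2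
    have h2 : (n ^ 2) ^ 2 = n ^ 4 := by ring
    have hNd : N d = n ^ 8 + ((d : ℕ) + 1) ^ 2 := rfl
    omega
  have hN0 : ∀ d, 0 < N d := fun d => lt_trans (by positivity) (hNlb d)
  have ha0 : ∀ d, 0 < a d := by
    intro d
    rcases Nat.eq_zero_or_pos (a d) with h | h
    · exfalso; have h1 := hab d; rw [h, mul_zero] at h1; have h2 := hN0 d; omega
    · exact h
  have hb0 : ∀ d, 0 < b d := by
    intro d
    rcases Nat.eq_zero_or_pos (b d) with h | h
    · exfalso; have h1 := hab d; rw [h] at h1; simp at h1; have h2 := hN0 d; omega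
    · exact h
  -- injectivity of the squarefree parts
  have hainj : Function.Injective a := by
    intro i j hij
    by_contra hne
    -- wlog N i > N j
    have key : ∀ i j : Fin (n ^ 2), a i = a j → N j < N i → False := by
      intro i j hija hlt
      have hblt : b j < b i := by
        by_contra hble
        push_neg at hble
        have : b i ^ 2 * a i ≤ b j ^ 2 * a j := by
          rw [hija]
          exact Nat.mul_le_mul_right _ (Nat.pow_le_pow_left hble 2)
        rw [hab i, hab j] at this
        omega
      -- N i - N j ≥ a j * (2 b j + 1) > a j * b j > n ^ 4
      have h1 : (a j * b j) ^ 2 > (n ^ 4) ^ 2 := by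
        have : (a j * b j) ^ 2 = a j * (b j ^ 2 * a j) := by ring
        rw [this, hab j]
        calc (n ^ 4) ^ 2 < N j := hNlb j
        _ ≤ a j * N j := Nat.le_mul_of_pos_left _ (ha0 j)
      have h2 : n ^ 4 < a j * b j := by
        by_contra hle
        push_neg at hle
        exact absurd (Nat.pow_le_pow_left hle 2) (by omega)
      have h3 : N j + n ^ 4 < N i := by
        have hbi : b j + 1 ≤ b i := hblt
        have : (b j + 1) ^ 2 * a j ≤ b i ^ 2 * a i := by
          rw [hija]
          exact Nat.mul_le_mul_right _ (Nat.pow_le_pow_left hbi 2)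
        have hexp : (b j + 1) ^ 2 * a j = b j ^ 2 * a j + (2 * b j + 1) * a j := by ring
        rw [hexp, hab i, hab j] at this
        have : N j + (2 * b j + 1) * a j ≤ N i := this
        have hgt : n ^ 4 < (2 * b j + 1) * a j := by
          calc n ^ 4 < a j * b j := h2
          _ ≤ (2 * b j + 1) * a j := by nlinarith [ha0 j, hb0 j]
        omega
      -- but N i - N j < n^4
      have h4 : N i ≤ N j + n ^ 4 := by
        have hubi := hNub i
        have hlbj := hNlb j
        have : (n ^ 4) ^ 2 = n ^ 8 := by ring
        omega
      omega
    rcases lt_trichotomy (N i) (N j) with h | h | h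
    · exact key j i hij.symm h
    · -- N i = N j forces i = j
      apply hne
      have : ((i : ℕ) + 1) ^ 2 = ((j : ℕ) + 1) ^ 2 := by
        rw [hN] at h; simp only at h; omega
      have := Nat.pow_left_injective (by norm_num) this
      exact Fin.ext (by omega)
    · exact key i j hij h
  -- now the linear independence
  rw [Fintype.linearIndependent_iff]
  intro g hg i
  -- rewrite the sum
  have hsqrt : ∀ d : Fin (n ^ 2),
      Real.sqrt (((n : ℝ) ^ 4) ^ 2 + (((d : ℕ) + 1 : ℕ) : ℝ) ^ 2)
        = (b d : ℝ) * Real.sqrt (a d) := by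
    intro d
    rw [hfun d, ← hab d]
    push_cast
    rw [show ((b d : ℝ) ^ 2 * (a d : ℝ)) = ((b d : ℝ)) ^ 2 * (a d : ℝ) from rfl,
      Real.sqrt_mul (by positivity), Real.sqrt_sq (Nat.cast_nonneg _)]
  -- set up the finset sum over squarefree parts
  set T : Finset ℕ := Finset.univ.biUnion (fun d : Fin (n ^ 2) => (a d).primeFactors) with hT
  set c : ℕ → ℚ := fun m => ∑ d ∈ Finset.univ.filter (fun d : Fin (n ^ 2) => a d = m),
    g d * (b d : ℚ) with hc
  have hTprime : ∀ q ∈ T, q.Prime := by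
    intro q hq
    obtain ⟨d, _, hd⟩ := Finset.mem_biUnion.1 hq
    exact Nat.prime_of_mem_primeFactors hd
  have hprop : ∀ m ∈ Finset.univ.image a, Squarefree m ∧
      ∀ q : ℕ, q.Prime → q ∣ m → q ∈ T := by
    intro m hm
    obtain ⟨d, _, rfl⟩ := Finset.mem_image.1 hm
    refine ⟨hsf d, fun q hq hqd => ?_⟩
    exact Finset.mem_biUnion.2 ⟨d, Finset.mem_univ d,
      Nat.mem_primeFactors.2 ⟨hq, hqd, (ha0 d).ne'⟩⟩
  have hfiltereq : ∀ d : Fin (n ^ 2),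
      Finset.univ.filter (fun e : Fin (n ^ 2) => a e = a d) = {d} := by
    intro d
    ext e
    simp only [Finset.mem_filter, Finset.mem_univ, true_and, Finset.mem_singleton]
    exact ⟨fun h => hainj h, fun h => h ▸ rfl⟩
  have hcval : ∀ d : Fin (n ^ 2), c (a d) = g d * (b d : ℚ) := by
    intro d
    rw [hc]
    simp only
    rw [hfiltereq d, Finset.sum_singleton]
  have hsum0 : ∑ m ∈ Finset.univ.image a, (c m : ℝ) * Real.sqrt m = 0 := by
    rw [Finset.sum_image (fun x _ y _ h => hainj h)]
    rw [← hg]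
    apply Finset.sum_congr rfl
    intro d _
    rw [hcval d, hsqrt d, Rat.smul_def]
    push_cast
    ring
  have := sqrt_indep T hTprime (Finset.univ.image a) c hprop hsum0 (a i)
    (Finset.mem_image_of_mem a (Finset.mem_univ i))
  rw [hcval i] at this
  have hbne : (b i : ℚ) ≠ 0 := Nat.cast_ne_zero.2 (hb0 i).ne'
  exact (mul_eq_zero.1 this).resolve_right hbne
end

section
/- Let N, n be positive integers and let A and B be disjoint sets of n points each in the integer grid {0,…,N}² ⊆ ℝ², with no three points of A ∪ B collinear. Let w* be the minimum of w(M) = Σ_{a∈A} ‖a − M(a)‖ over all bijections M : A → B. If M is a bijection A → B with w(M) < w* + 1/(8N⁴) (a near-minimum weight perfect matching), then no two edges of M cross: for all distinct a₁, a₂ ∈ A, the open segments from a₁ to M(a₁) and from a₂ to M(a₂) are disjoint. -/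
set_option maxHeartbeats 1000000


open scoped BigOperators

attribute [local instance] Classical.propDecidable

/-- `p` is a point of the integer grid `{0,…,N}² ⊆ ℝ²`. -/
def OnGrid (N : ℕ) (p : EuclideanSpace ℝ (Fin 2)) : Prop :=
  ∀ i : Fin 2, ∃ m : ℕ, m ≤ N ∧ p i = (m : ℝ)

/-- The Euclidean weight of a perfect matching (bijection) `M` between
two finite point sets `A` and `B` in the plane. -/
noncomputable def ewWeight (A B : Finset (EuclideanSpace ℝ (Fin 2)))
    (M : {x // x ∈ A} → {y // y ∈ B}) : ℝ :=
  ∑ a : {x // x ∈ A},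
    ‖(a : EuclideanSpace ℝ (Fin 2)) - (M a : EuclideanSpace ℝ (Fin 2))‖

noncomputable abbrev E2 := EuclideanSpace ℝ (Fin 2)
noncomputable def det2 (u v : E2) : ℝ := u 0 * v 1 - u 1 * v 0

lemma collinear_of_det0 (P Q R : E2) (h : det2 (Q - P) (R - P) = 0) :
    Collinear ℝ ({P, Q, R} : Set E2) := by
  rw [collinear_iff_exists_forall_eq_smul_vadd]
  by_cases h0 : Q - P = 0
  · refine ⟨P, R - P, ?_⟩
    intro p hp
    rcases hp with hp | hp | hp
    · exact ⟨0, by rw [hp]; simp⟩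
    · refine ⟨0, ?_⟩
      have hQ : Q = P := by rwa [sub_eq_zero] at h0
      rw [hp, hQ]; simp
    · exact ⟨1, by rw [hp]; simp⟩
  · refine ⟨P, Q - P, ?_⟩
    intro p hp
    rcases hp with hp | hp | hp
    · exact ⟨0, by rw [hp]; simp⟩
    · exact ⟨1, by rw [hp]; simp⟩
    · rw [hp]
      have hcoord : ¬ ((Q - P) 0 = 0 ∧ (Q - P) 1 = 0) := by
        intro ⟨h1, h2⟩
        apply h0; ext i; fin_cases i
        · simpa using h1
        · simpa using h2
      simp only [det2] at h
      by_cases hx : (Q - P) 0 = 0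
      · have hy : (Q - P) 1 ≠ 0 := fun hy => hcoord ⟨hx, hy⟩
        refine ⟨(R - P) 1 / (Q - P) 1, ?_⟩
        have key : R - P = ((R - P) 1 / (Q - P) 1) • (Q - P) := by
          ext i; fin_cases i
          · show (R - P) 0 = (R - P) 1 / (Q - P) 1 * (Q - P) 0
            rw [hx, mul_zero]
            rw [hx] at h
            have : (Q - P) 1 * (R - P) 0 = 0 := by linarith
            rcases mul_eq_zero.mp this with h' | h'
            · exact absurd h' hy
            · exact h'
          · show (R - P) 1 = (R - P) 1 / (Q - P) 1 * (Q - P) 1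
            rw [div_mul_eq_mul_div, mul_div_assoc, div_self hy, mul_one]
        simp only [vadd_eq_add]
        rw [← key]; abel
      · refine ⟨(R - P) 0 / (Q - P) 0, ?_⟩
        have key : R - P = ((R - P) 0 / (Q - P) 0) • (Q - P) := by
          ext i; fin_cases i
          · show (R - P) 0 = (R - P) 0 / (Q - P) 0 * (Q - P) 0
            rw [div_mul_eq_mul_div, mul_div_assoc, div_self hx, mul_one]
          · show (R - P) 1 = (R - P) 0 / (Q - P) 0 * (Q - P) 1
            rw [div_mul_eq_mul_div, eq_div_iff hx]
            linear_combination h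
        simp only [vadd_eq_add]
        rw [← key]; abel

lemma grid_diff_int {N : ℕ} {p q : E2} (hp : OnGrid N p) (hq : OnGrid N q) (i : Fin 2) :
    ∃ z : ℤ, (p - q) i = (z : ℝ) := by
  obtain ⟨m, _, hm⟩ := hp i
  obtain ⟨m', _, hm'⟩ := hq i
  exact ⟨(m : ℤ) - m', by simp [hm, hm']⟩

lemma det_int {N : ℕ} {p q r : E2} (hp : OnGrid N p) (hq : OnGrid N q) (hr : OnGrid N r) :
    ∃ z : ℤ, det2 (q - p) (r - p) = (z : ℝ) := by
  obtain ⟨z1, h1⟩ := grid_diff_int hq hp 0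
  obtain ⟨z2, h2⟩ := grid_diff_int hq hp 1
  obtain ⟨z3, h3⟩ := grid_diff_int hr hp 0
  obtain ⟨z4, h4⟩ := grid_diff_int hr hp 1
  exact ⟨z1 * z4 - z2 * z3, by simp [det2, h1, h2, h3, h4]⟩

lemma one_le_abs_det {x : ℝ} (hne : x ≠ 0) (h : ∃ z : ℤ, x = (z : ℝ)) : 1 ≤ |x| := by
  obtain ⟨z, rfl⟩ := h
  have hz : z ≠ 0 := by exact_mod_cast hne
  have := Int.one_le_abs hz
  calc (1:ℝ) = ((1:ℤ):ℝ) := by norm_num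
  _ ≤ ((|z| : ℤ) : ℝ) := by exact_mod_cast this
  _ = |((z:ℤ):ℝ)| := by push_cast; ring

lemma norm_le_grid {N : ℕ} {p q : E2} (hp : OnGrid N p) (hq : OnGrid N q) :
    ‖p - q‖ ≤ Real.sqrt 2 * N := by
  have hsq : ∀ i : Fin 2, ((p - q) i)^2 ≤ (N:ℝ)^2 := by
    intro i
    obtain ⟨m, hm, hmi⟩ := hp i
    obtain ⟨m', hm', hmi'⟩ := hq i
    have h1 : (p - q) i = (m:ℝ) - m' := by simp [hmi, hmi']
    rw [h1]
    have : (m:ℝ) ≤ N := by exact_mod_cast hm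
    have : (m':ℝ) ≤ N := by exact_mod_cast hm'
    apply sq_le_sq' <;> push_cast <;> nlinarith [Nat.cast_nonneg (α := ℝ) m, Nat.cast_nonneg (α := ℝ) m']
  have hns : ‖p - q‖^2 ≤ 2 * (N:ℝ)^2 := by
    have : ‖p - q‖^2 = ((p-q) 0)^2 + ((p-q) 1)^2 := by
      rw [← real_inner_self_eq_norm_sq]
      simp only [PiLp.inner_apply, Fin.sum_univ_two, RCLike.inner_apply, conj_trivial]; ring
    rw [this]
    linarith [hsq 0, hsq 1]
  have h2 : (Real.sqrt 2 * N)^2 = 2 * (N:ℝ)^2 := by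
    rw [mul_pow, Real.sq_sqrt (by norm_num : (0:ℝ) ≤ 2)]
  have h3 := Real.sqrt_le_sqrt hns
  rw [Real.sqrt_sq (norm_nonneg _)] at h3
  have h4 : Real.sqrt (2 * (N:ℝ)^2) = Real.sqrt 2 * N := by
    rw [Real.sqrt_mul (by norm_num : (0:ℝ) ≤ 2), Real.sqrt_sq (Nat.cast_nonneg N)]
  rw [h4] at h3
  exact h3

lemma lagrange2 (u v : E2) : det2 u v ^ 2 + (inner ℝ u v : ℝ)^2 = ‖u‖^2 * ‖v‖^2 := by
  have hu : ‖u‖^2 = u 0^2 + u 1^2 := by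
    rw [← real_inner_self_eq_norm_sq]
    simp only [PiLp.inner_apply, Fin.sum_univ_two, RCLike.inner_apply, conj_trivial]; ring
  have hv : ‖v‖^2 = v 0^2 + v 1^2 := by
    rw [← real_inner_self_eq_norm_sq]
    simp only [PiLp.inner_apply, Fin.sum_univ_two, RCLike.inner_apply, conj_trivial]; ring
  have huv : (inner ℝ u v : ℝ) = u 0 * v 0 + u 1 * v 1 := by
    simp only [PiLp.inner_apply, Fin.sum_univ_two, RCLike.inner_apply, conj_trivial]; ring
  rw [hu, hv, huv, det2]; ring

lemma tri_real (Nr L₁ L₂ c D u α β : ℝ) (hN : 1 ≤ Nr)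
    (hα : 0 < α) (hβ : 0 < β) (hα1 : α ≤ 1) (hβ1 : β ≤ 1)
    (hd1 : 1 ≤ α * |D|) (hd2 : 1 ≤ β * |D|)
    (hL1 : L₁ ≤ Real.sqrt 2 * Nr) (hL2 : L₂ ≤ Real.sqrt 2 * Nr)
    (hu : u ≤ Real.sqrt 2 * Nr)
    (hL1n : 0 ≤ L₁) (hL2n : 0 ≤ L₂) (hun : 0 ≤ u)
    (hcle : |c| ≤ L₁ * L₂)
    (hlag : D^2 + c^2 = L₁^2 * L₂^2)
    (husq : u^2 = α^2*L₁^2 + β^2*L₂^2 + 2*(α*β)*c) :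
    u + 1 / (16 * Nr^4) ≤ α * L₁ + β * L₂ := by
  have habsD : 0 ≤ |D| := abs_nonneg D
  have hDabs : 1 ≤ |D| := le_trans hd1 (by nlinarith)
  have hsqD : |D|^2 = D^2 := sq_abs D
  have hD2 : 1 ≤ D^2 := by nlinarith
  have hprod : 1 ≤ L₁ * L₂ := by nlinarith [hD2, sq_nonneg c, mul_nonneg hL1n hL2n]
  have hL1pos : 0 < L₁ := by nlinarith [hprod, hL2n]
  have hL2pos : 0 < L₂ := by nlinarith [hprod, hL1n]
  have hcl : 0 < L₁ * L₂ + c := by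
    have hc2 : c^2 < (L₁*L₂)^2 := by nlinarith
    nlinarith [neg_abs_le c, mul_pos hL1pos hL2pos]
  have hS : 0 < α*L₁ + β*L₂ := add_pos (mul_pos hα hL1pos) (mul_pos hβ hL2pos)
  have key : (α*L₁+β*L₂ - u) * ((L₁*L₂ + c) * (α*L₁+β*L₂ + u)) = 2*(α*β)*D^2 := by
    have h1 : (α*L₁+β*L₂)^2 - u^2 = 2*(α*β)*(L₁*L₂ - c) := by rw [husq]; ring
    linear_combination (L₁*L₂ + c) * h1 - (2*α*β) * hlag
  have h2 : 2 ≤ 2*(α*β)*D^2 := by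
    have hmm : (1:ℝ)*1 ≤ (α*|D|)*(β*|D|) :=
      mul_le_mul hd1 hd2 zero_le_one (mul_nonneg hα.le habsD)
    nlinarith
  have hNr0 : (0:ℝ) < Nr := by linarith
  have hs2' : Real.sqrt 2 ^ 2 = 2 := Real.sq_sqrt (by norm_num)
  have hs2n : (0:ℝ) ≤ Real.sqrt 2 := Real.sqrt_nonneg 2
  have hb1 : L₁*L₂ + c ≤ 4*Nr^2 := by
    nlinarith [le_abs_self c, mul_le_mul hL1 hL2 hL2n (mul_nonneg hs2n hNr0.le)]
  have hb2 : α*L₁ + β*L₂ + u ≤ 3*(Real.sqrt 2)*Nr := by nlinarith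
  have hSupos : 0 < α*L₁+β*L₂ - u := by
    have hP0 : 0 < (L₁*L₂+c) * (α*L₁+β*L₂+u) := mul_pos hcl (by linarith)
    nlinarith
  have hPb : (L₁*L₂+c) * (α*L₁+β*L₂+u) ≤ (4*Nr^2) * (3*(Real.sqrt 2)*Nr) := by
    have h4 : (0:ℝ) ≤ 4*Nr^2 := by positivity
    exact mul_le_mul hb1 hb2 (by linarith) h4
  have hkey2 : 2 ≤ (α*L₁+β*L₂ - u) * ((4*Nr^2) * (3*(Real.sqrt 2)*Nr)) := by
    calc (2:ℝ) = 2 := rfl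
    _ ≤ 2*(α*β)*D^2 := h2
    _ = (α*L₁+β*L₂ - u) * ((L₁*L₂+c) * (α*L₁+β*L₂+u)) := key.symm
    _ ≤ _ := mul_le_mul_of_nonneg_left hPb hSupos.le
  have hs2 : Real.sqrt 2 ≤ 2 := by nlinarith
  have hfin : 1 / (16*Nr^4) ≤ α*L₁+β*L₂ - u := by
    rw [div_le_iff₀ (by positivity)]
    have hQle : (4*Nr^2) * (3*(Real.sqrt 2)*Nr) ≤ 2 * (16*Nr^4) := by
      have h3 : (0:ℝ) ≤ Nr^3 := by positivity
      nlinarith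
    have hQpos : (0:ℝ) < (4*Nr^2) * (3*(Real.sqrt 2)*Nr) := by
      have : (0:ℝ) < Real.sqrt 2 := by nlinarith
      positivity
    nlinarith
  linarith

lemma tri (N : ℕ) (hN : 1 ≤ (N:ℝ)) (e₁ e₂ : E2) (α β : ℝ)
    (hα : 0 < α) (hβ : 0 < β) (hα1 : α ≤ 1) (hβ1 : β ≤ 1)
    (hd1 : 1 ≤ α * |det2 e₁ e₂|) (hd2 : 1 ≤ β * |det2 e₁ e₂|)
    (hL1 : ‖e₁‖ ≤ Real.sqrt 2 * N) (hL2 : ‖e₂‖ ≤ Real.sqrt 2 * N)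
    (hu : ‖α • e₁ + β • e₂‖ ≤ Real.sqrt 2 * N) :
    ‖α • e₁ + β • e₂‖ + 1 / (16 * (N:ℝ)^4) ≤ α * ‖e₁‖ + β * ‖e₂‖ := by
  have husq : ‖α • e₁ + β • e₂‖^2 = α^2*‖e₁‖^2 + β^2*‖e₂‖^2 + 2*(α*β)*(inner ℝ e₁ e₂ : ℝ) := by
    have h := norm_add_sq_real (α • e₁) (β • e₂)
    rw [norm_smul, norm_smul, real_inner_smul_left, real_inner_smul_right,
      Real.norm_eq_abs, Real.norm_eq_abs, abs_of_pos hα, abs_of_pos hβ] at h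
    rw [h]; ring
  exact tri_real N ‖e₁‖ ‖e₂‖ (inner ℝ e₁ e₂) (det2 e₁ e₂) ‖α • e₁ + β • e₂‖ α β hN
    hα hβ hα1 hβ1 hd1 hd2 hL1 hL2 hu (norm_nonneg _) (norm_nonneg _) (norm_nonneg _)
    (abs_real_inner_le_norm e₁ e₂) (lagrange2 e₁ e₂) husq


lemma crossing_gap (N : ℕ) (hN : 0 < N) (a₁ b₁ a₂ b₂ X : E2)
    (hga₁ : OnGrid N a₁) (hgb₁ : OnGrid N b₁) (hga₂ : OnGrid N a₂) (hgb₂ : OnGrid N b₂)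
    (hc₁ : ¬ Collinear ℝ ({a₂, b₂, a₁} : Set E2))
    (hc₂ : ¬ Collinear ℝ ({a₁, b₁, b₂} : Set E2))
    (hc₃ : ¬ Collinear ℝ ({a₁, b₁, a₂} : Set E2))
    (hc₄ : ¬ Collinear ℝ ({a₂, b₂, b₁} : Set E2))
    (hX₁ : X ∈ openSegment ℝ a₁ b₁) (hX₂ : X ∈ openSegment ℝ a₂ b₂) :
    ‖a₁ - b₂‖ + ‖a₂ - b₁‖ + 1 / (8 * (N:ℝ)^4) ≤ ‖a₁ - b₁‖ + ‖a₂ - b₂‖ := by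
  have hN1 : 1 ≤ (N:ℝ) := by exact_mod_cast hN
  obtain ⟨c₁', t, hc₁', ht0, hct, hXe₁⟩ := hX₁
  obtain ⟨c₂', s, hc₂', hs0, hcs, hXe₂⟩ := hX₂
  set e₁ : E2 := b₁ - a₁ with he₁
  set e₂ : E2 := b₂ - a₂ with he₂
  have ht1 : t < 1 := by linarith
  have hs1 : s < 1 := by linarith
  have hX1' : X - a₁ = t • e₁ := by
    rw [← hXe₁, he₁, show c₁' = 1 - t by linarith]
    module
  have hX2' : X - a₂ = s • e₂ := by
    rw [← hXe₂, he₂, show c₂' = 1 - s by linarith]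
    module
  set D := det2 e₁ e₂ with hD
  -- the four lattice determinants
  have hI₁ : det2 (b₂ - a₂) (a₁ - a₂) = t * D := by
    have hv : a₁ - a₂ = s • e₂ - t • e₁ := by
      have := sub_sub_sub_cancel_left a₁ a₂ X  -- ?
      rw [← hX2', ← hX1']; abel
    rw [hv, ← he₂, hD]
    simp only [det2, PiLp.sub_apply, PiLp.smul_apply, smul_eq_mul]
    ring
  have hI₂ : det2 (b₁ - a₁) (b₂ - a₁) = (1 - s) * D := by
    have hv : b₂ - a₁ = t • e₁ + (1 - s) • e₂ := by
      have h1 : b₂ - X = (1 - s) • e₂ := by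
        rw [he₂]; rw [show b₂ - X = (b₂ - a₂) - (X - a₂) by abel, hX2', he₂]
        module
      rw [show b₂ - a₁ = (b₂ - X) + (X - a₁) by abel, h1, hX1']; abel
    rw [hv, ← he₁, hD]
    simp only [det2, PiLp.add_apply, PiLp.sub_apply, PiLp.smul_apply, smul_eq_mul]
    ring
  have hI₃ : det2 (b₁ - a₁) (a₂ - a₁) = -(s * D) := by
    have hv : a₂ - a₁ = t • e₁ - s • e₂ := by
      rw [← hX2', ← hX1']; abel
    rw [hv, ← he₁, hD]
    simp only [det2, PiLp.sub_apply, PiLp.smul_apply, smul_eq_mul]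
    ring
  have hI₄ : det2 (b₂ - a₂) (b₁ - a₂) = -((1 - t) * D) := by
    have hv : b₁ - a₂ = (1 - t) • e₁ + s • e₂ := by
      have h1 : b₁ - X = (1 - t) • e₁ := by
        rw [show b₁ - X = (b₁ - a₁) - (X - a₁) by abel, hX1', he₁]
        module
      rw [show b₁ - a₂ = (b₁ - X) + (X - a₂) by abel, h1, hX2']
    rw [hv, ← he₂, hD]
    simp only [det2, PiLp.add_apply, PiLp.sub_apply, PiLp.smul_apply, smul_eq_mul]
    ring
  -- each is a nonzero integer
  have habs : ∀ (P Q R : E2), OnGrid N P → OnGrid N Q → OnGrid N R →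
      ¬ Collinear ℝ ({P, Q, R} : Set E2) → 1 ≤ |det2 (Q - P) (R - P)| := by
    intro P Q R hP hQ hR hncol
    refine one_le_abs_det (fun h => hncol (collinear_of_det0 P Q R h)) (det_int hP hQ hR)
  have h₁ := habs a₂ b₂ a₁ hga₂ hgb₂ hga₁ hc₁
  have h₂ := habs a₁ b₁ b₂ hga₁ hgb₁ hgb₂ hc₂
  have h₃ := habs a₁ b₁ a₂ hga₁ hgb₁ hga₂ hc₃
  have h₄ := habs a₂ b₂ b₁ hga₂ hgb₂ hgb₁ hc₄
  rw [hI₁, abs_mul, abs_of_pos ht0] at h₁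
  rw [hI₂, abs_mul, abs_of_pos (by linarith : (0:ℝ) < 1 - s)] at h₂
  rw [hI₃, abs_neg, abs_mul, abs_of_pos hs0] at h₃
  rw [hI₄, abs_neg, abs_mul, abs_of_pos (by linarith : (0:ℝ) < 1 - t)] at h₄
  -- norms
  have hL1 : ‖e₁‖ ≤ Real.sqrt 2 * N := by rw [he₁]; exact norm_le_grid hgb₁ hga₁
  have hL2 : ‖e₂‖ ≤ Real.sqrt 2 * N := by rw [he₂]; exact norm_le_grid hgb₂ hga₂
  have hv₁ : t • e₁ + (1 - s) • e₂ = b₂ - a₁ := by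
    have h1 : b₂ - X = (1 - s) • e₂ := by
      rw [show b₂ - X = (b₂ - a₂) - (X - a₂) by abel, hX2', he₂]; module
    rw [show b₂ - a₁ = (b₂ - X) + (X - a₁) by abel, h1, hX1']; abel
  have hv₂ : (1 - t) • e₁ + s • e₂ = b₁ - a₂ := by
    have h1 : b₁ - X = (1 - t) • e₁ := by
      rw [show b₁ - X = (b₁ - a₁) - (X - a₁) by abel, hX1', he₁]; module
    rw [show b₁ - a₂ = (b₁ - X) + (X - a₂) by abel, h1, hX2']
  have hu₁ : ‖t • e₁ + (1 - s) • e₂‖ ≤ Real.sqrt 2 * N := by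
    rw [hv₁]; exact norm_le_grid hgb₂ hga₁
  have hu₂ : ‖(1 - t) • e₁ + s • e₂‖ ≤ Real.sqrt 2 * N := by
    rw [hv₂]; exact norm_le_grid hgb₁ hga₂
  have T₁ := tri N hN1 e₁ e₂ t (1 - s) ht0 (by linarith) ht1.le (by linarith)
    h₁ h₂ hL1 hL2 hu₁
  have T₂ := tri N hN1 e₁ e₂ (1 - t) s (by linarith) hs0 (by linarith) hs1.le
    h₄ h₃ hL1 hL2 hu₂
  rw [hv₁] at T₁
  rw [hv₂] at T₂
  have hn₁ : ‖b₂ - a₁‖ = ‖a₁ - b₂‖ := norm_sub_rev _ _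
  have hn₂ : ‖b₁ - a₂‖ = ‖a₂ - b₁‖ := norm_sub_rev _ _
  have hn₃ : ‖e₁‖ = ‖a₁ - b₁‖ := by rw [he₁]; exact norm_sub_rev _ _
  have hn₄ : ‖e₂‖ = ‖a₂ - b₂‖ := by rw [he₂]; exact norm_sub_rev _ _
  rw [hn₁, hn₃, hn₄] at T₁
  rw [hn₂, hn₃, hn₄] at T₂
  have hNpos : (0:ℝ) < (N:ℝ)^4 := by positivity
  have : 1 / (8 * (N:ℝ)^4) = 1 / (16 * (N:ℝ)^4) + 1 / (16 * (N:ℝ)^4) := by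
    field_simp
    ring
  nlinarith [T₁, T₂]

/-- For disjoint `n`-point sets `A, B` on the grid `{0,…,N}²` with no three points of
`A ∪ B` collinear: if `M` is a perfect matching with `w(M) < w* + 1/(8N⁴)`, where `w*` is
the minimum weight of a perfect matching, then no two edges of `M` cross. -/
theorem stmt_9 (N n : ℕ) (hN : 0 < N) (hn : 0 < n)
    (A B : Finset (EuclideanSpace ℝ (Fin 2)))
    (hAB : Disjoint A B) (hcardA : A.card = n) (hcardB : B.card = n)
    (hgrid : ∀ p ∈ A ∪ B, OnGrid N p)
    (hcol : ∀ P ∈ A ∪ B, ∀ Q ∈ A ∪ B, ∀ R ∈ A ∪ B, P ≠ Q → P ≠ R → Q ≠ R →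
      ¬ Collinear ℝ ({P, Q, R} : Set (EuclideanSpace ℝ (Fin 2))))
    (wstar : ℝ)
    (hwstar : IsLeast {w : ℝ | ∃ M : {x // x ∈ A} → {y // y ∈ B},
      Function.Bijective M ∧ ewWeight A B M = w} wstar)
    (M : {x // x ∈ A} → {y // y ∈ B}) (hM : Function.Bijective M)
    (hnear : ewWeight A B M < wstar + 1 / (8 * (N : ℝ) ^ 4)) :
    ∀ a₁ a₂ : {x // x ∈ A}, a₁ ≠ a₂ →
      Disjoint
        (openSegment ℝ (a₁ : EuclideanSpace ℝ (Fin 2)) (M a₁ : EuclideanSpace ℝ (Fin 2)))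
        (openSegment ℝ (a₂ : EuclideanSpace ℝ (Fin 2)) (M a₂ : EuclideanSpace ℝ (Fin 2))) := by
  intro a₁ a₂ hne
  by_contra hnd
  obtain ⟨X, hX₁, hX₂⟩ := Set.not_disjoint_iff.mp hnd
  set b₁ := M a₁ with hb₁
  set b₂ := M a₂ with hb₂
  -- memberships in A ∪ B
  have mA : ∀ a : {x // x ∈ A}, (a : E2) ∈ A ∪ B := fun a => Finset.mem_union_left _ a.2
  have mB : ∀ b : {y // y ∈ B}, (b : E2) ∈ A ∪ B := fun b => Finset.mem_union_right _ b.2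
  -- distinctness
  have hne' : (a₁ : E2) ≠ (a₂ : E2) := fun h => hne (Subtype.ext h)
  have hbne : (b₁ : E2) ≠ (b₂ : E2) := by
    intro h
    exact hne (hM.1 (Subtype.ext h))
  have hab : ∀ (a : {x // x ∈ A}) (b : {y // y ∈ B}), (a : E2) ≠ (b : E2) := by
    intro a b h
    exact Finset.disjoint_left.mp hAB a.2 (h ▸ b.2)
  -- collinearity facts
  have hc₁ : ¬ Collinear ℝ ({(a₂:E2), (b₂:E2), (a₁:E2)} : Set E2) :=
    hcol _ (mA a₂) _ (mB b₂) _ (mA a₁) (hab a₂ b₂) hne'.symm (Ne.symm (hab a₁ b₂))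
  have hc₂ : ¬ Collinear ℝ ({(a₁:E2), (b₁:E2), (b₂:E2)} : Set E2) :=
    hcol _ (mA a₁) _ (mB b₁) _ (mB b₂) (hab a₁ b₁) (hab a₁ b₂) hbne
  have hc₃ : ¬ Collinear ℝ ({(a₁:E2), (b₁:E2), (a₂:E2)} : Set E2) :=
    hcol _ (mA a₁) _ (mB b₁) _ (mA a₂) (hab a₁ b₁) hne' (Ne.symm (hab a₂ b₁))
  have hc₄ : ¬ Collinear ℝ ({(a₂:E2), (b₂:E2), (b₁:E2)} : Set E2) :=
    hcol _ (mA a₂) _ (mB b₂) _ (mB b₁) (hab a₂ b₂) (hab a₂ b₁) hbne.symm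
  have hgap := crossing_gap N hN (a₁:E2) (b₁:E2) (a₂:E2) (b₂:E2) X
    (hgrid _ (mA a₁)) (hgrid _ (mB b₁)) (hgrid _ (mA a₂)) (hgrid _ (mB b₂))
    hc₁ hc₂ hc₃ hc₄ hX₁ hX₂
  -- the swapped matching
  set σ : {x // x ∈ A} ≃ {x // x ∈ A} := Equiv.swap a₁ a₂ with hσ
  set M' : {x // x ∈ A} → {y // y ∈ B} := M ∘ σ with hM'
  have hM'bij : Function.Bijective M' := hM.comp σ.bijective
  have hwle : wstar ≤ ewWeight A B M' := hwstar.2 ⟨M', hM'bij, rfl⟩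
  have hdiff : ewWeight A B M - ewWeight A B M' =
      (‖(a₁:E2) - (b₁:E2)‖ + ‖(a₂:E2) - (b₂:E2)‖)
      - (‖(a₁:E2) - (b₂:E2)‖ + ‖(a₂:E2) - (b₁:E2)‖) := by
    unfold M'
    unfold ewWeight
    rw [← Finset.sum_sub_distrib]
    have hsub : ∀ a : {x // x ∈ A}, a ∈ (Finset.univ : Finset {x // x ∈ A}) →
        a ∉ ({a₁, a₂} : Finset {x // x ∈ A}) →
        ‖(a : E2) - (M a : E2)‖ - ‖(a : E2) - ((M ∘ σ) a : E2)‖ = 0 := by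
      intro a _ ha
      simp only [Finset.mem_insert, Finset.mem_singleton] at ha
      push_neg at ha
      have : σ a = a := Equiv.swap_apply_of_ne_of_ne ha.1 ha.2
      simp [Function.comp, this]
    rw [← Finset.sum_subset (Finset.subset_univ ({a₁, a₂} : Finset {x // x ∈ A})) hsub]
    rw [Finset.sum_pair hne]
    simp only [Function.comp, hσ, Equiv.swap_apply_left, Equiv.swap_apply_right]
    rw [← hb₁, ← hb₂]
    ring
  have : (1:ℝ) / (8 * (N:ℝ)^4) ≤ ewWeight A B M - ewWeight A B M' := by
    rw [hdiff]; linarith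
  linarith
end
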